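/- arXiv:1404.7328 — 5 statements merged into one kernel-verified Lean document; each statement's English description precedes it below -/
import Mathlib

section
/- Let T_1,…,T_N : ℓ^∞_M → ℝ be bounded linear functionals, let 𝒯 = {T_n : 1 ≤ n ≤ N}, and let A : ℓ^∞_M → ℓ^∞_N be defined by A x = (T_1 x, …, T_N x). Then the R-bound of 𝒯 equals the Rademacher cotype-2 constant of A: ℛ(𝒯) = C_2(A). -/
open MeasureTheory ProbabilityTheory Filter ENNReal

noncomputable section

/-- `ξ` is an independent family of Rademacher random variables on `(Ω, μ)`,
i.e. `P(ξ i = 1) = P(ξ i = -1) = 1/2`. -/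
def IsRademacherFam {ι Ω : Type*} [MeasurableSpace Ω] (μ : Measure Ω) (ξ : ι → Ω → ℝ) : Prop :=
  IsProbabilityMeasure μ ∧ (∀ i, Measurable (ξ i)) ∧
    iIndepFun ξ μ ∧
    ∀ i, μ.map (ξ i) =
      (2 : ℝ≥0∞)⁻¹ • Measure.dirac (1 : ℝ) + (2 : ℝ≥0∞)⁻¹ • Measure.dirac (-1 : ℝ)

/-- `ξ` is an independent family of standard Gaussian random variables on `(Ω, μ)`. -/
def IsGaussianFam {ι Ω : Type*} [MeasurableSpace Ω] (μ : Measure Ω) (ξ : ι → Ω → ℝ) : Prop :=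
  IsProbabilityMeasure μ ∧ (∀ i, Measurable (ξ i)) ∧
    iIndepFun ξ μ ∧
    ∀ i, μ.map (ξ i) = gaussianReal 0 1

/-- The randomized boundedness condition for a family of operators `𝒯 ⊆ L(X,Y)`, with
constant `C`, relative to the random sequence `ξ`:
`(E ‖∑ ξ_n T_n x_n‖²)^{1/2} ≤ C (E ‖∑ ξ_n x_n‖²)^{1/2}` for all finite choices
`T_n ∈ 𝒯` (repetitions allowed) and `x_n ∈ X`.  For `ξ` a Rademacher sequence this is
`R`-boundedness with constant `C`; for `ξ` a Gaussian sequence it is `γ`-boundedness. -/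
def BoundedWith {X Y Ω : Type*} [NormedAddCommGroup X] [NormedSpace ℝ X]
    [NormedAddCommGroup Y] [NormedSpace ℝ Y] [MeasurableSpace Ω]
    (μ : Measure Ω) (ξ : ℕ → Ω → ℝ) (𝒯 : Set (X →L[ℝ] Y)) (C : ℝ) : Prop :=
  ∀ (N : ℕ) (T : Fin N → X →L[ℝ] Y) (x : Fin N → X), (∀ n, T n ∈ 𝒯) →
    Real.sqrt (∫ ω, ‖∑ n : Fin N, ξ n.1 ω • T n (x n)‖ ^ 2 ∂μ) ≤
      C * Real.sqrt (∫ ω, ‖∑ n : Fin N, ξ n.1 ω • x n‖ ^ 2 ∂μ)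

/-- The family `𝒯` is bounded (R- or γ-, according to `ξ`). -/
def IsBoundedFam {X Y Ω : Type*} [NormedAddCommGroup X] [NormedSpace ℝ X]
    [NormedAddCommGroup Y] [NormedSpace ℝ Y] [MeasurableSpace Ω]
    (μ : Measure Ω) (ξ : ℕ → Ω → ℝ) (𝒯 : Set (X →L[ℝ] Y)) : Prop :=
  ∃ C : ℝ, 0 ≤ C ∧ BoundedWith μ ξ 𝒯 C

/-- The bound (R-bound or γ-bound according to `ξ`) of the family `𝒯`, defined as the least
admissible constant. -/
def boundConst {X Y Ω : Type*} [NormedAddCommGroup X] [NormedSpace ℝ X]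
    [NormedAddCommGroup Y] [NormedSpace ℝ Y] [MeasurableSpace Ω]
    (μ : Measure Ω) (ξ : ℕ → Ω → ℝ) (𝒯 : Set (X →L[ℝ] Y)) : ℝ :=
  sInf {C : ℝ | 0 ≤ C ∧ BoundedWith μ ξ 𝒯 C}

/-- `X` has cotype `q` (with respect to the random sequence `ξ`):
`(∑ ‖x_n‖^q)^{1/q} ≤ C (E‖∑ ξ_n x_n‖²)^{1/2}`. -/
def HasCotype (X : Type*) [NormedAddCommGroup X] [NormedSpace ℝ X] {Ω : Type*}
    [MeasurableSpace Ω] (μ : Measure Ω) (ξ : ℕ → Ω → ℝ) (q : ℝ) : Prop :=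
  ∃ C : ℝ, 0 ≤ C ∧ ∀ (N : ℕ) (x : Fin N → X),
    (∑ n, ‖x n‖ ^ q) ^ (1 / q) ≤ C * Real.sqrt (∫ ω, ‖∑ n : Fin N, ξ n.1 ω • x n‖ ^ 2 ∂μ)

/-- `X` has finite cotype: it has cotype `q` for some `q ∈ [2, ∞)`. -/
def HasFiniteCotype (X : Type*) [NormedAddCommGroup X] [NormedSpace ℝ X] {Ω : Type*}
    [MeasurableSpace Ω] (μ : Measure Ω) (ξ : ℕ → Ω → ℝ) : Prop :=
  ∃ q : ℝ, 2 ≤ q ∧ HasCotype X μ ξ q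


/-- The cotype-2 condition for an operator `A : X → Y`, with constant `C`, relative to the
random sequence `ξ`: `(∑ ‖A x_i‖²)^{1/2} ≤ C (E‖∑ ξ_i x_i‖²)^{1/2}`.  For a Rademacher
sequence `ξ` this is the Rademacher cotype-2 condition, for a Gaussian sequence the
Gaussian cotype-2 condition. -/
def Cotype2With {X Y Ω : Type*} [NormedAddCommGroup X] [NormedSpace ℝ X]
    [NormedAddCommGroup Y] [NormedSpace ℝ Y] [MeasurableSpace Ω]
    (μ : Measure Ω) (ξ : ℕ → Ω → ℝ) (A : X →L[ℝ] Y) (C : ℝ) : Prop :=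
  ∀ (k : ℕ) (x : Fin k → X),
    Real.sqrt (∑ i, ‖A (x i)‖ ^ 2) ≤
      C * Real.sqrt (∫ ω, ‖∑ i : Fin k, ξ i.1 ω • x i‖ ^ 2 ∂μ)

/-- The cotype-2 constant of an operator (Rademacher or Gaussian according to `ξ`). -/
def cotype2Const {X Y Ω : Type*} [NormedAddCommGroup X] [NormedSpace ℝ X]
    [NormedAddCommGroup Y] [NormedSpace ℝ Y] [MeasurableSpace Ω]
    (μ : Measure Ω) (ξ : ℕ → Ω → ℝ) (A : X →L[ℝ] Y) : ℝ :=
  sInf {C : ℝ | 0 ≤ C ∧ Cotype2With μ ξ A C}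

/-- The `ℓ²`-boundedness condition with constant `C` for a family of functionals on
`ℓ^∞_M = (Fin M → ℝ)` (with the sup norm):
`(∑ |S_i x_i|²)^{1/2} ≤ C · max_m (∑ |x_i(m)|²)^{1/2}`. -/
def Ell2BoundedWith (M : ℕ) (𝒯 : Set ((Fin M → ℝ) →L[ℝ] ℝ)) (C : ℝ) : Prop :=
  ∀ (k : ℕ) (S : Fin k → (Fin M → ℝ) →L[ℝ] ℝ) (x : Fin k → Fin M → ℝ), (∀ i, S i ∈ 𝒯) →
    Real.sqrt (∑ i, S i (x i) ^ 2) ≤ C * Real.sqrt (⨆ m : Fin M, ∑ i, x i m ^ 2)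

/-- The `ℓ²`-bound of a family of functionals on `ℓ^∞_M`. -/
def ell2BoundConst (M : ℕ) (𝒯 : Set ((Fin M → ℝ) →L[ℝ] ℝ)) : ℝ :=
  sInf {C : ℝ | 0 ≤ C ∧ Ell2BoundedWith M 𝒯 C}

/-- The 2-summing condition with constant `C` for an operator `A : ℓ^∞_M → Y`; recall that
for the domain `ℓ^∞_M` the supremum over the dual unit ball equals the maximum over the
coordinates, i.e. `(∑ ‖A x_i‖²)^{1/2} ≤ C · max_m (∑ |x_i(m)|²)^{1/2}`. -/
def Pi2With (M : ℕ) {Y : Type*} [NormedAddCommGroup Y] [NormedSpace ℝ Y]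
    (A : (Fin M → ℝ) →L[ℝ] Y) (C : ℝ) : Prop :=
  ∀ (k : ℕ) (x : Fin k → Fin M → ℝ),
    Real.sqrt (∑ i, ‖A (x i)‖ ^ 2) ≤ C * Real.sqrt (⨆ m : Fin M, ∑ i, x i m ^ 2)

/-- The 2-summing norm `π₂(A)` of an operator `A : ℓ^∞_M → Y`. -/
def pi2Const (M : ℕ) {Y : Type*} [NormedAddCommGroup Y] [NormedSpace ℝ Y]
    (A : (Fin M → ℝ) →L[ℝ] Y) : ℝ :=
  sInf {C : ℝ | 0 ≤ C ∧ Pi2With M A C}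

/-- `X` has (Rademacher) type `p` with respect to the random sequence `ξ`:
`(E‖∑ ξ_n x_n‖^p)^{1/p} ≤ τ (∑ ‖x_n‖^p)^{1/p}`. -/
def HasTypeP (X : Type*) [NormedAddCommGroup X] [NormedSpace ℝ X] {Ω : Type*}
    [MeasurableSpace Ω] (μ : Measure Ω) (ξ : ℕ → Ω → ℝ) (p : ℝ) : Prop :=
  ∃ τ : ℝ, 0 ≤ τ ∧ ∀ (N : ℕ) (x : Fin N → X),
    (∫ ω, ‖∑ n : Fin N, ξ n.1 ω • x n‖ ^ p ∂μ) ^ (1 / p) ≤ τ * (∑ n, ‖x n‖ ^ p) ^ (1 / p)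

/-- `X` has nontrivial type: type `p` for some `p ∈ (1, 2]`. -/
def HasNontrivialType (X : Type*) [NormedAddCommGroup X] [NormedSpace ℝ X] {Ω : Type*}
    [MeasurableSpace Ω] (μ : Measure Ω) (ξ : ℕ → Ω → ℝ) : Prop :=
  ∃ p : ℝ, 1 < p ∧ p ≤ 2 ∧ HasTypeP X μ ξ p

/-- The Banach space adjoint `T* : Y* → X*` of `T : X → Y`, given by `T* y* = y* ∘ T`. -/
def banachAdjoint {X Y : Type*} [NormedAddCommGroup X] [NormedSpace ℝ X]
    [NormedAddCommGroup Y] [NormedSpace ℝ Y] (T : X →L[ℝ] Y) :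
    (Y →L[ℝ] ℝ) →L[ℝ] (X →L[ℝ] ℝ) :=
  (ContinuousLinearMap.compSL X Y ℝ (RingHom.id ℝ) (RingHom.id ℝ)).flip T


section RadHelpers

variable {Ω : Type*} [MeasurableSpace Ω] {μ : Measure Ω} {r : ℕ → Ω → ℝ}

lemma rad_ae_abs (hr : IsRademacherFam μ r) (i : ℕ) : ∀ᵐ ω ∂μ, |r i ω| = 1 := by
  have hmeas := hr.2.1 i
  have hlaw := hr.2.2.2 i
  rw [ae_iff]
  have hs : MeasurableSet {x : ℝ | ¬ |x| = 1} :=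
    (_root_.measurable_abs (measurableSet_singleton 1) : MeasurableSet {x : ℝ | |x| = 1}).compl
  have : {ω | ¬ |r i ω| = 1} = (r i) ⁻¹' {x : ℝ | ¬ |x| = 1} := rfl
  rw [this, ← Measure.map_apply hmeas hs, hlaw]
  simp [Measure.dirac_apply' _ hs, Set.indicator_apply]

lemma rad_integrable_mul (hr : IsRademacherFam μ r) (i j : ℕ) :
    Integrable (fun ω => r i ω * r j ω) μ := by
  have : IsProbabilityMeasure μ := hr.1
  refine (integrable_const (1 : ℝ)).mono' ?_ ?_
  · exact ((hr.2.1 i).mul (hr.2.1 j)).aestronglyMeasurable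
  · filter_upwards [rad_ae_abs hr i, rad_ae_abs hr j] with ω hi hj
    rw [Real.norm_eq_abs, abs_mul, hi, hj, one_mul]

lemma integrable_smul_dirac (f : ℝ → ℝ) (hf : Measurable f) (a : ℝ) {c : ℝ≥0∞} (hc : c ≠ ⊤) :
    Integrable f (c • Measure.dirac a) := by
  refine ⟨hf.aestronglyMeasurable, ?_⟩
  rw [HasFiniteIntegral, lintegral_smul_measure, lintegral_dirac' a (hf.enorm)]
  exact ENNReal.mul_lt_top hc.lt_top (by simp)

lemma rad_integral (hr : IsRademacherFam μ r) (i : ℕ) : ∫ ω, r i ω ∂μ = 0 := by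
  have hmeas := hr.2.1 i
  have hlaw := hr.2.2.2 i
  have : ∫ ω, r i ω ∂μ = ∫ x, x ∂(μ.map (r i)) :=
    (integral_map hmeas.aemeasurable aestronglyMeasurable_id).symm
  rw [this, hlaw]
  have h1 : Integrable (fun x : ℝ => x) ((2 : ℝ≥0∞)⁻¹ • Measure.dirac (1 : ℝ)) :=
    integrable_smul_dirac _ measurable_id _ (by norm_num)
  have h2 : Integrable (fun x : ℝ => x) ((2 : ℝ≥0∞)⁻¹ • Measure.dirac (-1 : ℝ)) :=
    integrable_smul_dirac _ measurable_id _ (by norm_num)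
  rw [integral_add_measure h1 h2, integral_smul_measure, integral_smul_measure,
    integral_dirac, integral_dirac]
  norm_num

lemma rad_integral_sq (hr : IsRademacherFam μ r) (i : ℕ) : ∫ ω, r i ω * r i ω ∂μ = 1 := by
  have : IsProbabilityMeasure μ := hr.1
  have : ∫ ω, r i ω * r i ω ∂μ = ∫ ω, (1 : ℝ) ∂μ := by
    refine integral_congr_ae ?_
    filter_upwards [rad_ae_abs hr i] with ω hi
    have := abs_mul_abs_self (r i ω)
    rw [hi] at this; linarith
  rw [this]; simp

lemma rad_orth (hr : IsRademacherFam μ r) (k : ℕ) (a : Fin k → ℝ) :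
    ∫ ω, (∑ i : Fin k, a i * r i.1 ω) ^ 2 ∂μ = ∑ i, (a i) ^ 2 := by
  have hexp : ∀ ω, (∑ i : Fin k, a i * r i.1 ω) ^ 2
      = ∑ i : Fin k, ∑ j : Fin k, (a i * a j) * (r i.1 ω * r j.1 ω) := by
    intro ω
    rw [sq, Finset.sum_mul_sum]
    refine Finset.sum_congr rfl fun i _ => Finset.sum_congr rfl fun j _ => by ring
  simp only [hexp]
  rw [integral_finset_sum _ fun i _ => integrable_finset_sum _ fun j _ =>
    ((rad_integrable_mul hr i.1 j.1).const_mul _)]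
  have : ∀ i : Fin k, ∫ ω, ∑ j : Fin k, (a i * a j) * (r i.1 ω * r j.1 ω) ∂μ = (a i) ^ 2 := by
    intro i
    rw [integral_finset_sum _ fun j _ => ((rad_integrable_mul hr i.1 j.1).const_mul _)]
    have hterm : ∀ j : Fin k, ∫ ω, (a i * a j) * (r i.1 ω * r j.1 ω) ∂μ
        = (a i * a j) * ∫ ω, r i.1 ω * r j.1 ω ∂μ := fun j => integral_const_mul _ _
    simp only [hterm]
    rw [Finset.sum_eq_single_of_mem i (Finset.mem_univ i)]
    · rw [rad_integral_sq hr]; ring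
    · intro j _ hji
      have hij : (i.1 : ℕ) ≠ j.1 := fun h => hji.symm (Fin.val_injective h)
      have hindep : IndepFun (r i.1) (r j.1) μ := hr.2.2.1.indepFun hij
      have hmul : ∫ ω, r i.1 ω * r j.1 ω ∂μ = (∫ ω, r i.1 ω ∂μ) * ∫ ω, r j.1 ω ∂μ :=
        hindep.integral_mul_eq_mul_integral (hr.2.1 i.1).aestronglyMeasurable (hr.2.1 j.1).aestronglyMeasurable
      rw [hmul, rad_integral hr, rad_integral hr]
      ring
  simp only [this]

lemma rad_orth' (hr : IsRademacherFam μ r) (k : ℕ) (a : Fin k → ℝ) :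
    ∫ ω, ‖∑ i : Fin k, r i.1 ω • a i‖ ^ 2 ∂μ = ∑ i, (a i) ^ 2 := by
  have h1 : ∫ ω, ‖∑ i : Fin k, r i.1 ω • a i‖ ^ 2 ∂μ
      = ∫ ω, (∑ i : Fin k, a i * r i.1 ω) ^ 2 ∂μ := by
    refine integral_congr_ae (Filter.Eventually.of_forall fun ω => ?_)
    simp only [Real.norm_eq_abs, sq_abs]
    congr 1
    exact Finset.sum_congr rfl fun i _ => by rw [smul_eq_mul, mul_comm]
  rw [h1, rad_orth hr k a]

end RadHelpers

/-- **Lemma 2.9 (Rademacher case).**  For functionals `T₁, …, T_N : ℓ^∞_M → ℝ`, with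
`𝒯 = {T_n}` and `A : ℓ^∞_M → ℓ^∞_N` given by `A x = (T_n x)_n`, one has
`ℛ(𝒯) = C₂(A)`, the Rademacher cotype-2 constant of `A`. -/
theorem rBound_eq_rademacherCotype2Const
    {Ω : Type*} [MeasurableSpace Ω] (μ : Measure Ω) (r : ℕ → Ω → ℝ)
    (hr : IsRademacherFam μ r) (M N : ℕ)
    (T : Fin N → (Fin M → ℝ) →L[ℝ] ℝ) (A : (Fin M → ℝ) →L[ℝ] (Fin N → ℝ))
    (hA : ∀ (x : Fin M → ℝ) (n : Fin N), A x n = T n x) :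
    boundConst μ r (Set.range T) = cotype2Const μ r A := by
  have hset : {C : ℝ | 0 ≤ C ∧ BoundedWith μ r (Set.range T) C}
      = {C : ℝ | 0 ≤ C ∧ Cotype2With μ r A C} := by
    ext C
    simp only [Set.mem_setOf_eq]
    constructor
    · rintro ⟨hC0, hB⟩
      refine ⟨hC0, fun k x => ?_⟩
      rcases Nat.eq_zero_or_pos N with hN | hN
      · have hz : ∀ i : Fin k, ‖A (x i)‖ = 0 := fun i =>
          le_antisymm ((pi_norm_le_iff_of_nonneg le_rfl).2 fun m =>
            absurd m.isLt (by omega)) (norm_nonneg _)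
        have h0 : Real.sqrt (∑ i : Fin k, ‖A (x i)‖ ^ 2) = 0 := by simp [hz]
        rw [h0]
        positivity
      · have hne : Nonempty (Fin N) := ⟨⟨0, hN⟩⟩
        have hmax : ∀ i : Fin k, ∃ m : Fin N, ‖A (x i)‖ = |A (x i) m| := fun i => by
          obtain ⟨m, hm⟩ := Finite.exists_max (fun m : Fin N => |A (x i) m|)
          refine ⟨m, le_antisymm ((pi_norm_le_iff_of_nonneg (abs_nonneg _)).2 fun m' => by
            rw [Real.norm_eq_abs]; exact hm m') ?_⟩
          rw [← Real.norm_eq_abs]; exact norm_le_pi_norm (A (x i)) m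
        choose n hn using hmax
        have hL : Real.sqrt (∑ i : Fin k, ‖A (x i)‖ ^ 2)
            = Real.sqrt (∫ ω, ‖∑ i : Fin k, r i.1 ω • T (n i) (x i)‖ ^ 2 ∂μ) := by
          rw [rad_orth' hr k fun i => T (n i) (x i)]
          congr 1
          refine Finset.sum_congr rfl fun i _ => ?_
          show ‖A (x i)‖ ^ 2 = (T (n i) (x i)) ^ 2
          rw [hn i, sq_abs, hA]
        rw [hL]
        exact hB k (fun i => T (n i)) x fun i => Set.mem_range_self _
    · rintro ⟨hC0, hCo⟩
      refine ⟨hC0, fun k S x hS => ?_⟩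
      choose n hn using hS
      have hL : ∫ ω, ‖∑ i : Fin k, r i.1 ω • S i (x i)‖ ^ 2 ∂μ
          = ∑ i : Fin k, (S i (x i)) ^ 2 := rad_orth' hr k fun i => S i (x i)
      have hle : ∑ i : Fin k, (S i (x i)) ^ 2 ≤ ∑ i : Fin k, ‖A (x i)‖ ^ 2 := by
        refine Finset.sum_le_sum fun i _ => ?_
        have h1 : |S i (x i)| ≤ ‖A (x i)‖ := by
          rw [← hn i, ← hA, ← Real.norm_eq_abs]
          exact norm_le_pi_norm (A (x i)) (n i)
        calc (S i (x i)) ^ 2 = |S i (x i)| ^ 2 := (sq_abs _).symm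
          _ ≤ ‖A (x i)‖ ^ 2 := pow_le_pow_left₀ (abs_nonneg _) h1 2
      calc Real.sqrt (∫ ω, ‖∑ i : Fin k, r i.1 ω • S i (x i)‖ ^ 2 ∂μ)
          ≤ Real.sqrt (∑ i : Fin k, ‖A (x i)‖ ^ 2) := by
            rw [hL]; exact Real.sqrt_le_sqrt hle
        _ ≤ C * Real.sqrt (∫ ω, ‖∑ i : Fin k, r i.1 ω • x i‖ ^ 2 ∂μ) := hCo k x
  unfold boundConst cotype2Const
  rw [hset]
end
end

section
/- Let T_1,…,T_N : ℓ^∞_M → ℝ be bounded linear functionals, let 𝒯 = {T_n : 1 ≤ n ≤ N}, and let A : ℓ^∞_M → ℓ^∞_N be defined by A x = (T_1 x, …, T_N x). Then the γ-bound of 𝒯 equals the Gaussian cotype-2 constant of A: ℛ^γ(𝒯) = C_2^γ(A). -/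
open MeasureTheory ProbabilityTheory Filter ENNReal

noncomputable section

section AuxGaussian
open Real Set

lemma stdg_integral_eq (f : ℝ → ℝ) :
    ∫ x, f x ∂(gaussianReal 0 1) = ∫ x, gaussianPDFReal 0 1 x * f x := by
  rw [gaussianReal_of_var_ne_zero _ one_ne_zero, gaussianPDF_def]
  have h : ∀ x : ℝ, ENNReal.ofReal (gaussianPDFReal 0 1 x)
      = ((gaussianPDFReal 0 1 x).toNNReal : ℝ≥0∞) := fun _ => rfl
  simp_rw [h]
  rw [integral_withDensity_eq_integral_smul (measurable_gaussianPDFReal 0 1).real_toNNReal]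
  congr 1
  funext x
  rw [NNReal.smul_def, Real.coe_toNNReal _ (gaussianPDFReal_nonneg 0 1 x), smul_eq_mul]

lemma stdg_pdf_eq (x : ℝ) :
    gaussianPDFReal 0 1 x = (√(2 * π))⁻¹ * rexp (-(1/2) * x ^ 2) := by
  simp only [gaussianPDFReal]
  norm_num
  left; ring

lemma stdg_pdf_even (x : ℝ) : gaussianPDFReal 0 1 (-x) = gaussianPDFReal 0 1 x := by
  rw [stdg_pdf_eq, stdg_pdf_eq, neg_sq]

lemma integrable_pdf_mul_sq :
    Integrable (fun x : ℝ => gaussianPDFReal 0 1 x * x ^ 2) := by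
  have h := (integrable_rpow_mul_exp_neg_mul_sq (b := 1/2) (by norm_num) (s := 2)
    (by norm_num)).const_mul (√(2 * π))⁻¹
  refine h.congr (Filter.Eventually.of_forall fun x => ?_)
  simp only [stdg_pdf_eq, Real.rpow_two]
  ring

lemma integrable_pdf_mul_id :
    Integrable (fun x : ℝ => gaussianPDFReal 0 1 x * x) := by
  have h := (integrable_mul_exp_neg_mul_sq (b := 1/2) (by norm_num)).const_mul (√(2 * π))⁻¹
  refine h.congr (Filter.Eventually.of_forall fun x => ?_)
  simp only [stdg_pdf_eq]
  ring

lemma stdg_mean : ∫ x, x ∂(gaussianReal 0 1) = 0 := by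
  rw [stdg_integral_eq]
  set f : ℝ → ℝ := fun x => gaussianPDFReal 0 1 x * x with hf
  have h1 : ∫ x, f (-x) = ∫ x, f x :=
    (Measure.measurePreserving_neg (volume : Measure ℝ)).integral_comp
      (Homeomorph.neg ℝ).measurableEmbedding f
  have h2 : ∀ x, f (-x) = - f x := fun x => by
    simp only [hf, stdg_pdf_even, mul_neg]
  simp_rw [h2, integral_neg] at h1
  linarith

lemma stdg_var : ∫ x, x ^ 2 ∂(gaussianReal 0 1) = 1 := by
  rw [stdg_integral_eq]
  have habs : (fun x : ℝ => gaussianPDFReal 0 1 x * x ^ 2)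
      = fun x : ℝ => gaussianPDFReal 0 1 |x| * |x| ^ 2 := by
    funext x
    rcases abs_choice x with h | h
    · rw [h]
    · rw [h, stdg_pdf_even, neg_sq]
  rw [habs, integral_comp_abs (f := fun t : ℝ => gaussianPDFReal 0 1 t * t ^ 2)]
  have hset : ∫ t in Ioi (0:ℝ), gaussianPDFReal 0 1 t * t ^ 2
      = (√(2 * π))⁻¹ * ∫ t in Ioi (0:ℝ), t ^ (2:ℝ) * rexp (-(1/2) * t ^ (2:ℝ)) := by
    rw [← integral_const_mul]
    refine setIntegral_congr_fun measurableSet_Ioi fun t _ => ?_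
    simp only [stdg_pdf_eq, Real.rpow_two]
    ring
  rw [hset, integral_rpow_mul_exp_neg_mul_rpow (by norm_num) (by norm_num) (by norm_num)]
  have hgamma : Real.Gamma ((2 + 1) / 2) = 1/2 * √π := by
    rw [show ((2:ℝ) + 1)/2 = 1/2 + 1 by norm_num, Real.Gamma_add_one (by norm_num),
      Real.Gamma_one_half_eq]
  rw [hgamma]
  have hpow : ((1:ℝ)/2) ^ (-((2:ℝ) + 1) / 2) = 2 * √2 := by
    rw [show ((1:ℝ)/2) = 2⁻¹ by norm_num,
      show (-((2:ℝ) + 1) / 2) = -(3/2) by norm_num,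
      Real.inv_rpow (by norm_num), Real.rpow_neg (by norm_num), inv_inv,
      show ((3:ℝ)/2) = 1 + 1/2 by norm_num,
      Real.rpow_add (by norm_num), Real.rpow_one, ← Real.sqrt_eq_rpow]
  rw [hpow, Real.sqrt_mul (by norm_num : (0:ℝ) ≤ 2)]
  have h2 : √2 * √2 = 2 := Real.mul_self_sqrt (by norm_num)
  have h2' : (0:ℝ) < √2 := Real.sqrt_pos.mpr (by norm_num)
  have hπ : (0:ℝ) < √π := Real.sqrt_pos.mpr Real.pi_pos
  field_simp

lemma stdg_memL2 : MemLp (fun x : ℝ => x) 2 (gaussianReal 0 1) := by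
  refine (memLp_two_iff_integrable_sq measurable_id.aestronglyMeasurable).mpr ?_
  rw [gaussianReal_of_var_ne_zero _ one_ne_zero, gaussianPDF_def,
    integrable_withDensity_iff (measurable_gaussianPDFReal 0 1).ennreal_ofReal
      (Filter.Eventually.of_forall fun x => ENNReal.ofReal_lt_top)]
  refine integrable_pdf_mul_sq.congr (Filter.Eventually.of_forall fun x => ?_)
  show gaussianPDFReal 0 1 x * x ^ 2 = id x ^ 2 * (ENNReal.ofReal (gaussianPDFReal 0 1 x)).toReal
  rw [ENNReal.toReal_ofReal (gaussianPDFReal_nonneg 0 1 x), id_eq, mul_comm]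

section fam
variable {Ω : Type*} [MeasurableSpace Ω] {μ : Measure Ω} {g : ℕ → Ω → ℝ}

variable {Ω : Type*} [MeasurableSpace Ω] {μ : Measure Ω} {g : ℕ → Ω → ℝ}

lemma fam_memL2 (hg : IsGaussianFam μ g) (n : ℕ) : MemLp (g n) 2 μ := by
  have h := stdg_memL2
  rw [← hg.2.2.2 n] at h
  have := (memLp_map_measure_iff measurable_id.aestronglyMeasurable
    (hg.2.1 n).aemeasurable).mp h
  simpa [Function.comp] using this

lemma fam_mean (hg : IsGaussianFam μ g) (n : ℕ) : ∫ ω, g n ω ∂μ = 0 := by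
  have h := stdg_mean
  rw [← hg.2.2.2 n, integral_map (f := fun x : ℝ => x) (hg.2.1 n).aemeasurable
    measurable_id.aestronglyMeasurable] at h
  exact h

lemma fam_sq (hg : IsGaussianFam μ g) (n : ℕ) : ∫ ω, g n ω ^ 2 ∂μ = 1 := by
  have h := stdg_var
  rw [← hg.2.2.2 n, integral_map (f := fun x : ℝ => x ^ 2) (hg.2.1 n).aemeasurable
    (measurable_id.pow_const 2).aestronglyMeasurable] at h
  exact h

lemma key (hg : IsGaussianFam μ g) (k : ℕ) (a : Fin k → ℝ) :
    ∫ ω, (∑ i : Fin k, g i.1 ω * a i) ^ 2 ∂μ = ∑ i, a i ^ 2 := by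
  obtain ⟨hprob, hmeas, hindep, hmap⟩ := hg
  haveI := hprob
  have memL2 : ∀ n, MemLp (g n) 2 μ := fam_memL2 ⟨hprob, hmeas, hindep, hmap⟩
  have hint : ∀ n, Integrable (g n) μ := fun n => (memL2 n).integrable one_le_two
  have hmean : ∀ n, ∫ ω, g n ω ∂μ = 0 := fam_mean ⟨hprob, hmeas, hindep, hmap⟩
  have hsq : ∀ n, ∫ ω, g n ω ^ 2 ∂μ = 1 := fam_sq ⟨hprob, hmeas, hindep, hmap⟩
  have hprod : ∀ i j : ℕ, Integrable (fun ω => g i ω * g j ω) μ := by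
    intro i j
    rcases eq_or_ne i j with rfl | hij
    · simpa [pow_two] using (memL2 i).integrable_sq
    · exact (hindep.indepFun hij).integrable_mul (hint i) (hint j)
  have hGG : ∀ i j : ℕ, i ≠ j → ∫ ω, g i ω * g j ω ∂μ = 0 := by
    intro i j hij
    have h := (hindep.indepFun hij).integral_mul_eq_mul_integral (hmeas i).aestronglyMeasurable
      (hmeas j).aestronglyMeasurable
    calc ∫ ω, g i ω * g j ω ∂μ = ∫ ω, (g i * g j) ω ∂μ := rfl
    _ = (∫ ω, g i ω ∂μ) * ∫ ω, g j ω ∂μ := h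
    _ = 0 := by rw [hmean i, zero_mul]
  have expand : ∀ ω, (∑ i : Fin k, g i.1 ω * a i) ^ 2
      = ∑ i : Fin k, ∑ j : Fin k, a i * a j * (g i.1 ω * g j.1 ω) := by
    intro ω
    rw [sq, Finset.sum_mul_sum]
    exact Finset.sum_congr rfl fun i _ => Finset.sum_congr rfl fun j _ => by ring
  simp_rw [expand]
  rw [integral_finset_sum _ (fun i _ => integrable_finset_sum _
    (fun j _ => (hprod i.1 j.1).const_mul _))]
  have hinner : ∀ i : Fin k, ∫ ω, ∑ j : Fin k, a i * a j * (g i.1 ω * g j.1 ω) ∂μ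
      = ∑ j : Fin k, a i * a j * ∫ ω, g i.1 ω * g j.1 ω ∂μ := by
    intro i
    rw [integral_finset_sum _ (fun j _ => (hprod i.1 j.1).const_mul _)]
    exact Finset.sum_congr rfl fun j _ => integral_const_mul _ _
  simp_rw [hinner]
  refine Finset.sum_congr rfl fun i _ => ?_
  rw [Finset.sum_eq_single i]
  · have h1 : ∫ ω, g i.1 ω * g i.1 ω ∂μ = 1 := by simpa [pow_two] using hsq i.1
    rw [h1]; ring
  · intro j _ hji
    rw [hGG i.1 j.1 (fun h => hji (Fin.ext h.symm)), mul_zero]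
  · intro h; exact absurd (Finset.mem_univ i) h

lemma key_norm (hg : IsGaussianFam μ g) (k : ℕ) (a : Fin k → ℝ) :
    ∫ ω, ‖∑ i : Fin k, g i.1 ω • a i‖ ^ 2 ∂μ = ∑ i, a i ^ 2 := by
  simp_rw [smul_eq_mul, Real.norm_eq_abs, sq_abs]
  exact key hg k a

end fam
end AuxGaussian

/-- **Lemma 2.9 (Gaussian case).**  For functionals `T₁, …, T_N : ℓ^∞_M → ℝ`, with
`𝒯 = {T_n}` and `A : ℓ^∞_M → ℓ^∞_N` given by `A x = (T_n x)_n`, one has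
`ℛ^γ(𝒯) = C₂^γ(A)`, the Gaussian cotype-2 constant of `A`. -/
theorem gammaBound_eq_gaussianCotype2Const
    {Ω : Type*} [MeasurableSpace Ω] (μ : Measure Ω) (g : ℕ → Ω → ℝ)
    (hg : IsGaussianFam μ g) (M N : ℕ)
    (T : Fin N → (Fin M → ℝ) →L[ℝ] ℝ) (A : (Fin M → ℝ) →L[ℝ] (Fin N → ℝ))
    (hA : ∀ (x : Fin M → ℝ) (n : Fin N), A x n = T n x) :
    boundConst μ g (Set.range T) = cotype2Const μ g A := by
  have hSet : {C : ℝ | 0 ≤ C ∧ BoundedWith μ g (Set.range T) C}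
      = {C : ℝ | 0 ≤ C ∧ Cotype2With μ g A C} := by
    ext C
    simp only [Set.mem_setOf_eq, and_congr_right_iff]
    intro hC0
    constructor
    · -- BoundedWith → Cotype2With
      intro hB k x
      rcases Nat.eq_zero_or_pos N with rfl | hN
      · have hz : ∀ i : Fin k, ‖A (x i)‖ = 0 := by
          intro i
          rw [Subsingleton.elim (A (x i)) 0, norm_zero]
        simp only [hz]
        simp only [ne_eq, OfNat.ofNat_ne_zero, not_false_eq_true, zero_pow,
          Finset.sum_const, smul_zero, Real.sqrt_zero]
        exact mul_nonneg hC0 (Real.sqrt_nonneg _)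
      · haveI : Nonempty (Fin N) := ⟨⟨0, hN⟩⟩
        have hmax : ∀ i : Fin k, ∃ n : Fin N, ‖A (x i)‖ = |T n (x i)| := by
          intro i
          obtain ⟨n, -, hn⟩ := Finset.exists_max_image Finset.univ
            (fun m => |A (x i) m|) ⟨Classical.arbitrary _, Finset.mem_univ _⟩
          refine ⟨n, le_antisymm ?_ ?_⟩
          · rw [← hA]
            exact (pi_norm_le_iff_of_nonneg (abs_nonneg _)).mpr
              (fun m => by simpa [Real.norm_eq_abs] using hn m (Finset.mem_univ m))
          · rw [← hA]
            simpa [Real.norm_eq_abs] using norm_le_pi_norm (A (x i)) n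
        choose n hn using hmax
        have h := hB k (fun i => T (n i)) x (fun i => Set.mem_range_self _)
        have hL : ∫ ω, ‖∑ i : Fin k, g i.1 ω • T (n i) (x i)‖ ^ 2 ∂μ
            = ∑ i : Fin k, ‖A (x i)‖ ^ 2 := by
          rw [key_norm hg k (fun i => T (n i) (x i))]
          exact Finset.sum_congr rfl fun i _ => by rw [hn i, sq_abs]
        rw [hL] at h
        exact h
    · -- Cotype2With → BoundedWith
      intro hK k S x hS
      have hL : ∫ ω, ‖∑ i : Fin k, g i.1 ω • S i (x i)‖ ^ 2 ∂μ
          = ∑ i : Fin k, (S i (x i)) ^ 2 := key_norm hg k (fun i => S i (x i))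
      rw [hL]
      refine le_trans (Real.sqrt_le_sqrt (Finset.sum_le_sum fun i _ => ?_)) (hK k x)
      obtain ⟨m, hm⟩ := hS i
      have habs : |S i (x i)| ≤ ‖A (x i)‖ := by
        rw [← hm, ← hA]
        simpa [Real.norm_eq_abs] using norm_le_pi_norm (A (x i)) m
      calc (S i (x i)) ^ 2 = |S i (x i)| ^ 2 := (sq_abs _).symm
      _ ≤ ‖A (x i)‖ ^ 2 := by
        exact pow_le_pow_left₀ (abs_nonneg _) habs 2
  simp only [boundConst, cotype2Const]
  rw [hSet]
end
end

section
/- Let n ≥ 1 and let x_1, …, x_n be real numbers. If γ_1, …, γ_n are independent standard Gaussian random variables, then ((log n)/n · ∑_{i=1}^n x_i²)^{1/2} ≤ 4 · E[max_{1≤i≤n} |γ_i x_i|]. -/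
open MeasureTheory ProbabilityTheory Filter ENNReal

noncomputable section

open Real
set_option maxHeartbeats 1000000
set_option linter.unusedSectionVars false
set_option linter.unusedVariables false


def Gfun (y : ℝ) : ℝ := y / (1 + y^2) * Real.exp (-(y^2)/2)

lemma cont_aux : Continuous (fun y : ℝ => Real.exp (-(y^2)/2) * (2/(1+y^2)^2 - 1) * (-1)) := by
  apply Continuous.mul _ continuous_const
  apply Continuous.mul (by continuity)
  apply Continuous.sub _ continuous_const
  apply Continuous.div continuous_const (by continuity)
  intro y; positivity

lemma Gfun_deriv (y : ℝ) :
    HasDerivAt (fun z => -Gfun z) (Real.exp (-(y^2)/2) * (2/(1+y^2)^2 - 1) * (-1)) y := by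
  have h1 : HasDerivAt (fun z : ℝ => z / (1 + z^2)) ((1 - y^2)/(1+y^2)^2) y := by
    have hne : (1 + y^2) ≠ 0 := by positivity
    have := (hasDerivAt_id y).div ((hasDerivAt_const y (1:ℝ)).add
      ((hasDerivAt_id y).pow 2)) hne
    refine this.congr_deriv ?_
    simp
    field_simp
    ring
  have h2 : HasDerivAt (fun z : ℝ => Real.exp (-(z^2)/2)) (Real.exp (-(y^2)/2) * (-y)) y := by
    have h0 : HasDerivAt (fun z : ℝ => -(z^2)/2) (-y) y := by
      have := ((hasDerivAt_id y).pow 2).neg.div_const 2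
      refine this.congr_deriv ?_
      simp
      ring
    exact (Real.hasDerivAt_exp _).comp y h0
  have h3 := (h1.mul h2).neg
  refine h3.congr_deriv ?_
  have hne : (1 + y^2) ≠ 0 := by positivity
  field_simp
  ring

lemma Gfun_integral_le {a b : ℝ} (hab : a ≤ b) :
    Gfun a - Gfun b ≤ ∫ y in a..b, Real.exp (-(y^2)/2) := by
  have hFTC : ∫ y in a..b, (Real.exp (-(y^2)/2) * (2/(1+y^2)^2 - 1) * (-1)) =
      -Gfun b - (-Gfun a) := by
    apply intervalIntegral.integral_eq_sub_of_hasDerivAt (fun y _ => Gfun_deriv y)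
    exact cont_aux.intervalIntegrable _ _
  have hmono : ∫ y in a..b, (Real.exp (-(y^2)/2) * (2/(1+y^2)^2 - 1) * (-1)) ≤
      ∫ y in a..b, Real.exp (-(y^2)/2) := by
    apply intervalIntegral.integral_mono_on hab
    · exact cont_aux.intervalIntegrable _ _
    · apply Continuous.intervalIntegrable; continuity
    · intro y _
      have h1 : 0 < (1+y^2)^2 := by positivity
      have h2 : (0:ℝ) < Real.exp (-(y^2)/2) := Real.exp_pos _
      have h3 : (0:ℝ) < 2/(1+y^2)^2 := by positivity
      nlinarith
  linarith [hFTC ▸ hmono]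





lemma gpdf_eq (x : ℝ) : gaussianPDFReal 0 1 x = (Real.sqrt (2*π))⁻¹ * Real.exp (-(x^2)/2) := by
  simp [gaussianPDFReal]

lemma nu_Icc {a b : ℝ} (hab : a ≤ b) :
    ((gaussianReal 0 1) (Set.Icc a b)).toReal
      = (Real.sqrt (2*π))⁻¹ * ∫ y in a..b, Real.exp (-(y^2)/2) := by
  rw [gaussianReal_apply_eq_integral 0 one_ne_zero]
  rw [ENNReal.toReal_ofReal (by
    apply setIntegral_nonneg measurableSet_Icc
    intro x _; exact gaussianPDFReal_nonneg _ _ _)]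
  rw [integral_Icc_eq_integral_Ioc, ← intervalIntegral.integral_of_le hab]
  simp_rw [gpdf_eq]
  rw [intervalIntegral.integral_const_mul]









lemma Gfun_neg (y : ℝ) : Gfun (-y) = - Gfun y := by
  simp [Gfun, neg_div]

lemma sqrt_two_pi_le : Real.sqrt (2*π) ≤ 2.51 := by
  rw [show (2.51:ℝ) = Real.sqrt (2.51^2) from (Real.sqrt_sq (by norm_num)).symm]
  apply Real.sqrt_le_sqrt
  nlinarith [Real.pi_lt_d2]

lemma inv_sqrt_two_pi_ge : (0.398:ℝ) ≤ (Real.sqrt (2*π))⁻¹ := by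
  have h1 : (0:ℝ) < Real.sqrt (2*π) := Real.sqrt_pos.2 (by positivity)
  have := sqrt_two_pi_le
  rw [le_inv_comm₀ (by norm_num) h1]
  · linarith
  
-- tail measure lower bound
lemma tail_meas_lb {t : ℝ} (ht : 1.54 ≤ t) :
    2 * (Real.sqrt (2*π))⁻¹ * (Gfun t - Gfun (2*t)) ≤
      ((gaussianReal 0 1) {y : ℝ | t ≤ |y|}).toReal := by
  have h0 : (0:ℝ) < t := by linarith
  have hsub : Set.Icc t (2*t) ∪ Set.Icc (-(2*t)) (-t) ⊆ {y : ℝ | t ≤ |y|} := by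
    rintro y (hy | hy)
    · simp only [Set.mem_setOf_eq]
      rw [abs_of_nonneg (by linarith [hy.1])]
      exact hy.1
    · simp only [Set.mem_setOf_eq]
      rw [abs_of_nonpos (by linarith [hy.2])]
      linarith [hy.2]
  have hdisj : Disjoint (Set.Icc t (2*t)) (Set.Icc (-(2*t)) (-t)) := by
    apply Set.disjoint_left.2
    rintro y h1 h2
    linarith [h1.1, h2.2]
  have hν : IsProbabilityMeasure (gaussianReal (0:ℝ) 1) := inferInstance
  have hmeas : ((gaussianReal 0 1) (Set.Icc t (2*t))).toReal
      + ((gaussianReal 0 1) (Set.Icc (-(2*t)) (-t))).toReal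
      ≤ ((gaussianReal 0 1) {y : ℝ | t ≤ |y|}).toReal := by
    rw [← ENNReal.toReal_add (measure_ne_top _ _) (measure_ne_top _ _),
      ← measure_union hdisj measurableSet_Icc]
    exact ENNReal.toReal_mono (measure_ne_top _ _) (measure_mono hsub)
  have e1 : Gfun t - Gfun (2*t) ≤ ∫ y in t..(2*t), Real.exp (-(y^2)/2) :=
    Gfun_integral_le (by linarith)
  have e2 : Gfun t - Gfun (2*t) ≤ ∫ y in (-(2*t))..(-t), Real.exp (-(y^2)/2) := by
    have := Gfun_integral_le (show -(2*t) ≤ -t by linarith)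
    rw [Gfun_neg, Gfun_neg] at this
    linarith
  rw [nu_Icc (by linarith : t ≤ 2*t), nu_Icc (by linarith : -(2*t) ≤ -t)] at hmeas
  have hpos : (0:ℝ) < (Real.sqrt (2*π))⁻¹ := by
    have := inv_sqrt_two_pi_ge; linarith
  nlinarith [hmeas, e1, e2]









lemma exp_neg_le {t : ℝ} (ht : 2.4 ≤ t^2) : Real.exp (-(t^2)) ≤ 0.123 := by
  have h1 : (1.3:ℝ) ≤ Real.exp 0.3 := by linarith [Real.add_one_le_exp (0.3:ℝ)]
  have h2 : (1.3:ℝ)^8 ≤ Real.exp 0.3 ^ 8 := by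
    apply pow_le_pow_left₀ (by norm_num) h1
  have h3 : Real.exp 0.3 ^ (8:ℕ) = Real.exp 2.4 := by
    rw [← Real.exp_nat_mul]; norm_num
  have h4 : Real.exp 2.4 ≤ Real.exp (t^2) := Real.exp_le_exp.2 ht
  have h5 : (8.157:ℝ) ≤ Real.exp (t^2) := by nlinarith
  rw [Real.exp_neg]
  rw [inv_le_comm₀ (by positivity) (by norm_num)]
  linarith

lemma tail_numeric {t : ℝ} (ht : 2.4 ≤ t^2) (ht0 : 0 ≤ t) :
    Real.log 2 * Real.exp (-(t^2)) ≤
      ((gaussianReal 0 1) {y : ℝ | t ≤ |y|}).toReal := by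
  have ht1 : 1.54 ≤ t := by nlinarith
  set A := Real.exp (-(t^2)/2) with hA
  have hA0 : 0 < A := Real.exp_pos _
  have hAsq : A^2 = Real.exp (-(t^2)) := by
    rw [hA, ← Real.exp_nat_mul]; ring_nf
  have hA4 : A^4 = Real.exp (-((2*t)^2)/2) := by
    rw [hA, ← Real.exp_nat_mul]; ring_nf
  have hA2 : A^2 ≤ 0.123 := by rw [hAsq]; exact exp_neg_le ht
  have hA1le : A ≤ 1 := by
    rw [hA, Real.exp_le_one_iff]; nlinarith
  have hAt : A * t ≤ 0.71 := by
    have h1 : (1:ℝ) + t^2/2 ≤ Real.exp (t^2/2) := by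
      linarith [Real.add_one_le_exp (t^2/2)]
    have h2 : A * Real.exp (t^2/2) = 1 := by
      rw [hA, ← Real.exp_add, show -(t^2)/2 + t^2/2 = 0 by ring, Real.exp_zero]
    have h3 : A * (1 + t^2/2) ≤ 1 := by nlinarith
    nlinarith [sq_nonneg (t - 1.54)]
  have hlog : Real.log 2 ≤ 0.6932 := by
    have := Real.log_two_lt_d9; linarith
  have hlogpos : 0 < Real.log 2 := Real.log_pos (by norm_num)
  have hA4le : A^4 ≤ 0.123 * A := by nlinarith
  have hkey : Real.log 2 * A^2 * (34*t) ≤ 0.796 * (24*A - 17*A^4) := by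
    have e1 : Real.log 2 * A^2 * (34*t) = 34 * (Real.log 2) * (A*t) * A := by ring
    have e2 : 34 * (Real.log 2) * (A*t) * A ≤ 34 * 0.6932 * 0.71 * A := by
      have : (Real.log 2) * (A*t) ≤ 0.6932 * 0.71 := by
        have hAtpos : 0 ≤ A * t := by positivity
        nlinarith
      nlinarith
    have e3 : 0.796 * (24*A - 17*A^4) ≥ 0.796 * (24*A - 17*(0.123*A)) := by nlinarith
    nlinarith
  have hdiv : 12/(17*t) * A - 1/(2*t) * A^4 = (24*A - 17*A^4)/(34*t) := by
    field_simp; ring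
  have hstep1 : Real.log 2 * A^2 ≤ 0.796 * (12/(17*t) * A - 1/(2*t) * A^4) := by
    rw [hdiv, ← mul_div_assoc, le_div_iff₀ (by linarith : (0:ℝ) < 34*t)]
    linarith
  have h1 : 12/(17*t) ≤ t/(1+t^2) := by
    rw [div_le_div_iff₀ (by linarith) (by positivity)]
    nlinarith
  have h2 : 2*t/(1+(2*t)^2) ≤ 1/(2*t) := by
    rw [div_le_div_iff₀ (by positivity) (by linarith)]
    nlinarith
  have hc : (0.796:ℝ) ≤ 2 * (Real.sqrt (2*π))⁻¹ := by linarith [inv_sqrt_two_pi_ge]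
  have hG : Gfun t - Gfun (2*t) = t/(1+t^2) * A - 2*t/(1+(2*t)^2) * A^4 := by
    rw [Gfun, Gfun, ← hA, ← hA4]
  have hA4pos : (0:ℝ) < A^4 := by positivity
  have hinner : 12/(17*t) * A - 1/(2*t) * A^4 ≤ Gfun t - Gfun (2*t) := by
    rw [hG]
    have m1 := mul_le_mul_of_nonneg_right h1 hA0.le
    have m2 := mul_le_mul_of_nonneg_right h2 hA4pos.le
    linarith
  have hinnerpos : 0 ≤ 12/(17*t) * A - 1/(2*t) * A^4 := by
    have e1 : 1/(2*t) * A^4 ≤ 1/(2*t) * A := by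
      apply mul_le_mul_of_nonneg_left _ (by positivity)
      nlinarith
    have e2 : 1/(2*t) * A ≤ 12/(17*t) * A := by
      apply mul_le_mul_of_nonneg_right _ hA0.le
      rw [div_le_div_iff₀ (by linarith) (by linarith)]
      nlinarith
    linarith
  calc Real.log 2 * Real.exp (-(t^2)) = Real.log 2 * A^2 := by rw [hAsq]
    _ ≤ 0.796 * (12/(17*t) * A - 1/(2*t) * A^4) := hstep1
    _ ≤ 2 * (Real.sqrt (2*π))⁻¹ * (12/(17*t) * A - 1/(2*t) * A^4) :=
        mul_le_mul_of_nonneg_right hc hinnerpos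
    _ ≤ 2 * (Real.sqrt (2*π))⁻¹ * (Gfun t - Gfun (2*t)) :=
        mul_le_mul_of_nonneg_left hinner (by positivity)
    _ ≤ _ := tail_meas_lb ht1







lemma gauss_nn_meas : Measurable (fun x : ℝ => (gaussianPDFReal 0 1 x).toNNReal) :=
  (measurable_gaussianPDFReal 0 1).real_toNNReal

lemma nu_eq_withDensity : gaussianReal 0 1
    = volume.withDensity (fun x => ((gaussianPDFReal 0 1 x).toNNReal : ℝ≥0∞)) := by
  rw [gaussianReal_of_var_ne_zero 0 one_ne_zero]
  congr 1

lemma integral_nu (h : ℝ → ℝ) :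
    ∫ y, h y ∂(gaussianReal 0 1) = ∫ y, gaussianPDFReal 0 1 y * h y := by
  rw [nu_eq_withDensity, integral_withDensity_eq_integral_smul gauss_nn_meas]
  congr 1
  ext y
  rw [NNReal.smul_def, Real.coe_toNNReal _ (gaussianPDFReal_nonneg 0 1 y), smul_eq_mul]

lemma integrable_nu_abs : Integrable (fun y => |y|) (gaussianReal 0 1) := by
  rw [nu_eq_withDensity, integrable_withDensity_iff_integrable_coe_smul gauss_nn_meas]
  have hbound : ∀ y : ℝ, ‖((gaussianPDFReal 0 1 y).toNNReal : ℝ) • |y|‖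
      ≤ 2 * (Real.sqrt (2*π))⁻¹ * Real.exp (-(1/4) * y^2) := by
    intro y
    rw [smul_eq_mul, Real.coe_toNNReal _ (gaussianPDFReal_nonneg 0 1 y)]
    rw [Real.norm_eq_abs, abs_of_nonneg (mul_nonneg (gaussianPDFReal_nonneg 0 1 y) (abs_nonneg y))]
    rw [gpdf_eq]
    have h1 : |y| ≤ 2 * Real.exp (y^2/4) := by
      rcases le_or_gt (|y|) 2 with h | h
      · nlinarith [Real.exp_pos (y^2/4), Real.add_one_le_exp (y^2/4), sq_nonneg y]
      · have h2 : 1 + y^2/4 ≤ Real.exp (y^2/4) := by linarith [Real.add_one_le_exp (y^2/4)]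
        nlinarith [sq_abs y, sq_nonneg (|y| - 2)]
    have h2 : Real.exp (-(y^2)/2) * Real.exp (y^2/4) = Real.exp (-(1/4) * y^2) := by
      rw [← Real.exp_add]; ring_nf
    have h3 : (0:ℝ) < (Real.sqrt (2*π))⁻¹ := by linarith [inv_sqrt_two_pi_ge]
    calc (Real.sqrt (2*π))⁻¹ * Real.exp (-(y^2)/2) * |y|
        ≤ (Real.sqrt (2*π))⁻¹ * Real.exp (-(y^2)/2) * (2 * Real.exp (y^2/4)) := by
          apply mul_le_mul_of_nonneg_left h1 (by positivity)
      _ = 2 * (Real.sqrt (2*π))⁻¹ * Real.exp (-(1/4) * y^2) := by rw [← h2]; ring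
  apply Integrable.mono' ((integrable_exp_neg_mul_sq (by norm_num : (0:ℝ) < 1/4)).const_mul
    (2 * (Real.sqrt (2*π))⁻¹))
  · exact (gauss_nn_meas.coe_nnreal_real.smul (measurable_abs)).aestronglyMeasurable
  · exact ae_of_all _ hbound

lemma exp_deriv_neg (y : ℝ) :
    HasDerivAt (fun z : ℝ => -Real.exp (-(z^2)/2)) (y * Real.exp (-(y^2)/2)) y := by
  have h0 : HasDerivAt (fun z : ℝ => -(z^2)/2) (-y) y := by
    have := ((hasDerivAt_id y).pow 2).neg.div_const 2
    refine this.congr_deriv ?_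
    simp; ring
  have := ((Real.hasDerivAt_exp _).comp y h0).neg
  refine this.congr_deriv ?_
  ring

lemma exp_deriv_pos (y : ℝ) :
    HasDerivAt (fun z : ℝ => Real.exp (-(z^2)/2)) (-y * Real.exp (-(y^2)/2)) y := by
  have h0 : HasDerivAt (fun z : ℝ => -(z^2)/2) (-y) y := by
    have := ((hasDerivAt_id y).pow 2).neg.div_const 2
    refine this.congr_deriv ?_
    simp; ring
  have := (Real.hasDerivAt_exp _).comp y h0
  refine this.congr_deriv ?_
  ring

lemma abs_moment_nu : (0.789:ℝ) ≤ ∫ y, |y| ∂(gaussianReal 0 1) := by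
  set c := (Real.sqrt (2*π))⁻¹ with hc
  have hc0 : (0.398:ℝ) ≤ c := inv_sqrt_two_pi_ge
  set F : ℝ → ℝ := (Set.Icc (-4:ℝ) 4).indicator (fun y => |y|) with hF
  have hFle : ∀ y, F y ≤ |y| := fun y =>
    Set.indicator_le_self' (fun y _ => abs_nonneg y) y
  have hFint : Integrable F (gaussianReal 0 1) :=
    integrable_nu_abs.indicator measurableSet_Icc
  have hmono : ∫ y, F y ∂(gaussianReal 0 1) ≤ ∫ y, |y| ∂(gaussianReal 0 1) :=
    integral_mono hFint integrable_nu_abs hFle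
  have hcalc : ∫ y, F y ∂(gaussianReal 0 1)
      = ∫ y in (-4:ℝ)..4, c * Real.exp (-(y^2)/2) * |y| := by
    rw [integral_nu]
    have heq : ∀ y, gaussianPDFReal 0 1 y * F y
        = (Set.Icc (-4:ℝ) 4).indicator (fun y => c * Real.exp (-(y^2)/2) * |y|) y := by
      intro y
      by_cases hy : y ∈ Set.Icc (-4:ℝ) 4
      · simp only [hF, Set.indicator_of_mem hy, gpdf_eq, hc]
      · simp only [hF, Set.indicator_of_notMem hy, mul_zero]
    simp_rw [heq]
    rw [integral_indicator measurableSet_Icc, integral_Icc_eq_integral_Ioc,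
      ← intervalIntegral.integral_of_le (by norm_num : (-4:ℝ) ≤ 4)]
  have hcont : Continuous (fun y : ℝ => c * Real.exp (-(y^2)/2) * |y|) := by
    continuity
  have hsplit : ∫ y in (-4:ℝ)..4, c * Real.exp (-(y^2)/2) * |y|
      = (∫ y in (-4:ℝ)..0, c * Real.exp (-(y^2)/2) * |y|)
        + ∫ y in (0:ℝ)..4, c * Real.exp (-(y^2)/2) * |y| := by
    rw [intervalIntegral.integral_add_adjacent_intervals] <;>
      exact hcont.intervalIntegrable _ _
  have hpos : ∫ y in (0:ℝ)..4, c * Real.exp (-(y^2)/2) * |y| = c * (1 - Real.exp (-8)) := by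
    have e1 : ∫ y in (0:ℝ)..4, c * Real.exp (-(y^2)/2) * |y|
        = ∫ y in (0:ℝ)..4, c * (y * Real.exp (-(y^2)/2)) := by
      apply intervalIntegral.integral_congr
      intro y hy
      rw [Set.uIcc_of_le (by norm_num : (0:ℝ) ≤ 4)] at hy
      show c * Real.exp (-(y^2)/2) * |y| = c * (y * Real.exp (-(y^2)/2))
      rw [abs_of_nonneg hy.1]; ring
    rw [e1, intervalIntegral.integral_const_mul]
    rw [intervalIntegral.integral_eq_sub_of_hasDerivAt (fun y _ => exp_deriv_neg y)
      (((by continuity : Continuous (fun y:ℝ => y * Real.exp (-(y^2)/2)))).intervalIntegrable _ _)]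
    norm_num
    left; ring
  have hneg : ∫ y in (-4:ℝ)..0, c * Real.exp (-(y^2)/2) * |y| = c * (1 - Real.exp (-8)) := by
    have e1 : ∫ y in (-4:ℝ)..0, c * Real.exp (-(y^2)/2) * |y|
        = ∫ y in (-4:ℝ)..0, c * (-y * Real.exp (-(y^2)/2)) := by
      apply intervalIntegral.integral_congr
      intro y hy
      rw [Set.uIcc_of_le (by norm_num : (-4:ℝ) ≤ 0)] at hy
      show c * Real.exp (-(y^2)/2) * |y| = c * (-y * Real.exp (-(y^2)/2))
      rw [abs_of_nonpos hy.2]; ring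
    rw [e1, intervalIntegral.integral_const_mul]
    rw [intervalIntegral.integral_eq_sub_of_hasDerivAt (fun y _ => exp_deriv_pos y)
      (((by continuity : Continuous (fun y:ℝ => -y * Real.exp (-(y^2)/2)))).intervalIntegrable _ _)]
    norm_num
  have hexp8 : Real.exp (-8 : ℝ) ≤ 0.001 := by
    have h1 : (1.25:ℝ) ≤ Real.exp 0.25 := by linarith [Real.add_one_le_exp (0.25:ℝ)]
    have h2 : (1.25:ℝ)^32 ≤ Real.exp 0.25 ^ 32 := by
      apply pow_le_pow_left₀ (by norm_num) h1
    have h3 : Real.exp 0.25 ^ (32:ℕ) = Real.exp 8 := by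
      rw [← Real.exp_nat_mul]; norm_num
    have h4 : (1000:ℝ) ≤ Real.exp 8 := by
      rw [← h3]
      calc (1000:ℝ) ≤ 1.25^32 := by norm_num
        _ ≤ _ := h2
    rw [Real.exp_neg, inv_le_comm₀ (by positivity) (by norm_num)]
    linarith
  have : (0.789:ℝ) ≤ 2 * c * (1 - Real.exp (-8)) := by nlinarith [Real.exp_pos (-8:ℝ)]
  calc (0.789:ℝ) ≤ 2 * c * (1 - Real.exp (-8)) := this
    _ = c * (1 - Real.exp (-8)) + c * (1 - Real.exp (-8)) := by ring
    _ = ∫ y, F y ∂(gaussianReal 0 1) := by rw [hcalc, hsplit, hpos, hneg]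
    _ ≤ _ := hmono








lemma exp_24_ge : (11:ℝ) ≤ Real.exp 2.4 := by
  have h1 : Real.exp 2.4 ^ (5:ℕ) = Real.exp 12 := by
    rw [← Real.exp_nat_mul]; norm_num
  have h2 : (2.7182818283:ℝ)^12 ≤ Real.exp 1 ^ 12 := by
    apply pow_le_pow_left₀ (by norm_num) (le_of_lt Real.exp_one_gt_d9)
  have h3 : Real.exp 1 ^ (12:ℕ) = Real.exp 12 := by
    rw [← Real.exp_nat_mul]; norm_num
  have h4 : (161051:ℝ) ≤ Real.exp 12 := by
    rw [← h3]
    calc (161051:ℝ) ≤ 2.7182818283^12 := by norm_num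
      _ ≤ _ := h2
  nlinarith [Real.exp_pos (2.4:ℝ), sq_nonneg (Real.exp 2.4), sq_nonneg (Real.exp 2.4 - 11),
    sq_nonneg (Real.exp 2.4 + 11), sq_nonneg (Real.exp 2.4 ^2 - 121)]

lemma exp_24_le : Real.exp 2.4 ≤ 12 := by
  have h1 : Real.exp 2.4 ^ (5:ℕ) = Real.exp 12 := by
    rw [← Real.exp_nat_mul]; norm_num
  have h2 : Real.exp 1 ^ 12 ≤ (2.7182818286:ℝ)^12 := by
    apply pow_le_pow_left₀ (Real.exp_pos 1).le (le_of_lt Real.exp_one_lt_d9)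
  have h3 : Real.exp 1 ^ (12:ℕ) = Real.exp 12 := by
    rw [← Real.exp_nat_mul]; norm_num
  have h4 : Real.exp 12 ≤ (248832:ℝ) := by
    rw [← h3]
    calc Real.exp 1 ^ 12 ≤ (2.7182818286:ℝ)^12 := h2
      _ ≤ 248832 := by norm_num
  nlinarith [Real.exp_pos (2.4:ℝ), sq_nonneg (Real.exp 2.4 - 12), sq_nonneg (Real.exp 2.4 + 12),
    sq_nonneg (Real.exp 2.4^2 - 144)]


section Prob

variable {Ω : Type*} [MeasurableSpace Ω] {μ : Measure Ω} {n : ℕ} {g : Fin n → Ω → ℝ}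
  {x : Fin n → ℝ}

variable (hn : 1 ≤ n) (hprob : IsProbabilityMeasure μ) (hmeas : ∀ i, Measurable (g i))
  (hindep : iIndepFun g μ)
  (hmap : ∀ i, μ.map (g i) = gaussianReal 0 1)

include hn hprob hmeas hindep hmap

lemma habs_int (i : Fin n) : Integrable (fun ω => |g i ω|) μ := by
  have h := integrable_nu_abs
  rw [← hmap i] at h
  exact (integrable_map_measure measurable_abs.aestronglyMeasurable
    (hmeas i).aemeasurable).mp h

lemma F_meas : Measurable (fun ω => ⨆ i, |g i ω * x i|) := by
  have hne : Nonempty (Fin n) := Fin.pos_iff_nonempty.mp hn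
  have : (fun ω => ⨆ i, |g i ω * x i|)
      = fun ω => Finset.univ.sup' Finset.univ_nonempty (fun i => |g i ω * x i|) := by
    funext ω
    rw [Finset.sup'_univ_eq_ciSup]
  rw [this]
  have h2 : (fun ω => Finset.univ.sup' Finset.univ_nonempty (fun i => |g i ω * x i|))
      = Finset.univ.sup' Finset.univ_nonempty (fun i ω => |g i ω * x i|) := by
    funext ω
    rw [Finset.sup'_apply]
  rw [h2]
  exact Finset.measurable_sup' Finset.univ_nonempty
    (fun i _ => ((hmeas i).mul_const (x i)).abs)

lemma F_nonneg (ω : Ω) : 0 ≤ ⨆ i, |g i ω * x i| := by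
  have hne : Nonempty (Fin n) := Fin.pos_iff_nonempty.mp hn
  have hbdd : BddAbove (Set.range (fun i => |g i ω * x i|)) :=
    Set.Finite.bddAbove (Set.finite_range _)
  exact le_trans (abs_nonneg _) (le_ciSup hbdd (Classical.arbitrary (Fin n)))

lemma F_int : Integrable (fun ω => ⨆ i, |g i ω * x i|) μ := by
  have hne : Nonempty (Fin n) := Fin.pos_iff_nonempty.mp hn
  have hsum : Integrable (fun ω => ∑ i, |g i ω * x i|) μ := by
    apply integrable_finset_sum
    intro i _
    have : (fun ω => |g i ω * x i|) = fun ω => |g i ω| * |x i| := by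
      funext ω; rw [abs_mul]
    rw [this]
    exact (habs_int hn hprob hmeas hindep hmap i).mul_const _
  apply hsum.mono' (F_meas hn hprob hmeas hindep hmap).aestronglyMeasurable
  apply ae_of_all
  intro ω
  rw [Real.norm_eq_abs, abs_of_nonneg (F_nonneg hn hprob hmeas hindep hmap ω)]
  apply ciSup_le
  intro i
  exact Finset.single_le_sum (f := fun j => |g j ω * x j|)
    (fun j _ => abs_nonneg _) (Finset.mem_univ i)

lemma term_le_F (ω : Ω) (i : Fin n) : |g i ω * x i| ≤ ⨆ j, |g j ω * x j| := by
  have hbdd : BddAbove (Set.range (fun j => |g j ω * x j|)) :=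
    Set.Finite.bddAbove (Set.finite_range _)
  exact le_ciSup hbdd i

-- single-variable lower bound
lemma single_lb {i₀ : Fin n} {c : ℝ} (hc : 0 ≤ c) (hcx : c ≤ |x i₀|) :
    0.789 * c ≤ ∫ ω, ⨆ i, |g i ω * x i| ∂μ := by
  haveI := hprob
  have h1 : ∀ ω, c * |g i₀ ω| ≤ ⨆ i, |g i ω * x i| := by
    intro ω
    refine le_trans ?_ (term_le_F hn hprob hmeas hindep hmap ω i₀)
    rw [abs_mul]
    calc c * |g i₀ ω| = |g i₀ ω| * c := by ring
      _ ≤ |g i₀ ω| * |x i₀| := mul_le_mul_of_nonneg_left hcx (abs_nonneg _)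
  have h2 : ∫ ω, c * |g i₀ ω| ∂μ ≤ ∫ ω, ⨆ i, |g i ω * x i| ∂μ := by
    apply integral_mono ((habs_int hn hprob hmeas hindep hmap i₀).const_mul c)
      (F_int hn hprob hmeas hindep hmap) h1
  have h3 : ∫ ω, c * |g i₀ ω| ∂μ = c * ∫ ω, |g i₀ ω| ∂μ := integral_const_mul _ _
  have h4 : ∫ ω, |g i₀ ω| ∂μ = ∫ y, |y| ∂(gaussianReal 0 1) := by
    rw [← hmap i₀, integral_map (hmeas i₀).aemeasurable measurable_abs.aestronglyMeasurable]
  have h5 := abs_moment_nu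
  nlinarith [h2, h3, h4]

-- tail event lower bound
lemma tail_lb (S : Finset (Fin n)) (hS : S.Nonempty) {c t : ℝ} (hc : 0 ≤ c)
    (hcx : ∀ i ∈ S, c ≤ |x i|) (ht : 0 ≤ t) :
    c * t * (1 - (1 - ((gaussianReal 0 1) {y : ℝ | t ≤ |y|}).toReal) ^ S.card)
      ≤ ∫ ω, ⨆ i, |g i ω * x i| ∂μ := by
  haveI := hprob
  haveI : IsProbabilityMeasure (gaussianReal (0:ℝ) 1) := inferInstance
  set p : ℝ := ((gaussianReal 0 1) {y : ℝ | t ≤ |y|}).toReal with hp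
  have hBmeas : MeasurableSet {y : ℝ | t ≤ |y|} :=
    measurableSet_le measurable_const measurable_abs
  have hCmeas : MeasurableSet {y : ℝ | ¬ (t ≤ |y|)} := hBmeas.compl
  set A : Set Ω := ⋃ i ∈ S, {ω | t ≤ |g i ω|} with hA
  have hAsetmeas : MeasurableSet A := by
    apply Set.Finite.measurableSet_biUnion S.finite_toSet
    intro i _
    exact measurableSet_le measurable_const (hmeas i).abs
  -- complement computation
  have hAc : Aᶜ = ⋂ i ∈ S, (g i) ⁻¹' {y : ℝ | ¬ (t ≤ |y|)} := by
    rw [hA, Set.compl_iUnion₂]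
    congr 1
  have hindep' : μ (⋂ i ∈ S, (g i) ⁻¹' {y : ℝ | ¬ (t ≤ |y|)})
      = ∏ i ∈ S, μ ((g i) ⁻¹' {y : ℝ | ¬ (t ≤ |y|)}) := by
    apply hindep.meas_biInter
    intro i _
    exact ⟨{y : ℝ | ¬ (t ≤ |y|)}, hCmeas, rfl⟩
  have hone : ∀ i ∈ S, μ ((g i) ⁻¹' {y : ℝ | ¬ (t ≤ |y|)})
      = (gaussianReal 0 1) {y : ℝ | ¬ (t ≤ |y|)} := by
    intro i _
    rw [← hmap i, Measure.map_apply (hmeas i) hCmeas]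
  set q : ℝ≥0∞ := (gaussianReal 0 1) {y : ℝ | ¬ (t ≤ |y|)} with hq
  have hAcval : μ Aᶜ = q ^ S.card := by
    rw [hAc, hindep', Finset.prod_congr rfl hone, Finset.prod_const]
  -- q.toReal = 1 - p
  have hqp : p + q.toReal = 1 := by
    have h1 : (gaussianReal 0 1) {y : ℝ | t ≤ |y|} + q = 1 := by
      rw [hq]
      have := measure_add_measure_compl (μ := gaussianReal 0 1) hBmeas
      rw [measure_univ] at this
      convert this using 2
      rfl
    have h2 := congrArg ENNReal.toReal h1
    rw [ENNReal.toReal_add (measure_ne_top _ _) (measure_ne_top _ _),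
      ENNReal.toReal_one] at h2
    exact h2
  -- measure of A
  have hAval : (μ A).toReal = 1 - q.toReal ^ S.card := by
    have h1 : μ A = 1 - μ Aᶜ := by
      rw [← prob_compl_eq_one_sub hAsetmeas.compl, compl_compl]
    rw [h1, hAcval]
    rw [ENNReal.toReal_sub_of_le (by
      calc q ^ S.card ≤ 1 ^ S.card := pow_le_pow_left' prob_le_one _
        _ = 1 := one_pow _) one_ne_top]
    rw [ENNReal.toReal_pow]
    norm_num
  -- pointwise bound
  have hpt : ∀ ω, A.indicator (fun _ => c * t) ω ≤ ⨆ i, |g i ω * x i| := by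
    intro ω
    by_cases hω : ω ∈ A
    · rw [Set.indicator_of_mem hω]
      obtain ⟨i, hiS, hig⟩ := by
        simpa only [hA, Set.mem_iUnion, Set.mem_setOf_eq, exists_prop] using hω
      refine le_trans ?_ (term_le_F hn hprob hmeas hindep hmap ω i)
      rw [abs_mul]
      calc c * t ≤ |x i| * |g i ω| := by
            apply mul_le_mul (hcx i hiS) hig ht (abs_nonneg _)
        _ = |g i ω| * |x i| := by ring
    · rw [Set.indicator_of_notMem hω]
      exact F_nonneg hn hprob hmeas hindep hmap ω
  have hint : ∫ ω, A.indicator (fun _ => c * t) ω ∂μ ≤ ∫ ω, ⨆ i, |g i ω * x i| ∂μ := by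
    apply integral_mono ((integrable_const (c*t)).indicator hAsetmeas)
      (F_int hn hprob hmeas hindep hmap) hpt
  have hival : ∫ ω, A.indicator (fun _ => c * t) ω ∂μ = (μ A).toReal * (c * t) := by
    rw [integral_indicator_const _ hAsetmeas]
    simp [smul_eq_mul, measureReal_def]
  rw [hival, hAval] at hint
  have hqeq : q.toReal = 1 - p := by linarith
  rw [hqeq] at hint
  linarith



lemma key_lb (S : Finset (Fin n)) (hS : S.Nonempty) {c : ℝ} (hc : 0 ≤ c)
    (hcx : ∀ i ∈ S, c ≤ |x i|) :
    Real.sqrt (Real.log S.card) / 2 * c ≤ ∫ ω, ⨆ i, |g i ω * x i| ∂μ := by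
  set m := S.card with hm
  have hm1 : 1 ≤ m := Finset.card_pos.mpr hS
  have hmpos : (0:ℝ) < m := by exact_mod_cast hm1
  have hlognn : 0 ≤ Real.log m := Real.log_nonneg (by exact_mod_cast hm1)
  rcases le_or_gt m 11 with hm11 | hm12
  · -- small case
    obtain ⟨i₀, hi₀⟩ := hS
    have h1 : Real.log m ≤ 2.4 := by
      have : Real.log m ≤ Real.log 11 := by
        apply Real.log_le_log hmpos
        exact_mod_cast hm11
      have h11 : Real.log 11 ≤ 2.4 := by
        rw [Real.log_le_iff_le_exp (by norm_num)]
        exact exp_24_ge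
      linarith
    have h2 : Real.sqrt (Real.log m) ≤ 1.55 := by
      calc Real.sqrt (Real.log m) ≤ Real.sqrt (1.55^2) := by
            apply Real.sqrt_le_sqrt; nlinarith
        _ = 1.55 := Real.sqrt_sq (by norm_num)
    have h3 := single_lb hn hprob hmeas hindep hmap hc (hcx i₀ hi₀)
    have h4 : Real.sqrt (Real.log m) / 2 * c ≤ 0.789 * c := by
      apply mul_le_mul_of_nonneg_right _ hc
      linarith
    linarith
  · -- large case
    set t := Real.sqrt (Real.log m) with hT
    have ht0 : 0 ≤ t := Real.sqrt_nonneg _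
    have ht2 : t^2 = Real.log m := Real.sq_sqrt hlognn
    have hlog24 : 2.4 ≤ Real.log m := by
      have h12 : (2.4:ℝ) ≤ Real.log 12 := by
        rw [show (2.4:ℝ) = Real.log (Real.exp 2.4) from (Real.log_exp _).symm]
        apply Real.log_le_log (Real.exp_pos _)
        exact exp_24_le
      have : Real.log 12 ≤ Real.log m := by
        apply Real.log_le_log (by norm_num)
        exact_mod_cast hm12
      linarith
    set p : ℝ := ((gaussianReal 0 1) {y : ℝ | t ≤ |y|}).toReal with hp
    have hptail : Real.log 2 * ((m:ℝ))⁻¹ ≤ p := by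
      have := tail_numeric (t := t) (by rw [ht2]; exact hlog24) ht0
      rwa [ht2, show -Real.log (m:ℝ) = -(Real.log m) by ring, Real.exp_neg,
        Real.exp_log hmpos] at this
    have hp1 : p ≤ 1 := by
      rw [hp]
      calc ((gaussianReal 0 1) {y : ℝ | t ≤ |y|}).toReal
          ≤ (1:ℝ≥0∞).toReal := ENNReal.toReal_mono one_ne_top prob_le_one
        _ = 1 := ENNReal.toReal_one
    have hhalf : (1 - p)^m ≤ 1/2 := by
      have e1 : 1 - p ≤ Real.exp (-(Real.log 2 / m)) := by
        have := Real.add_one_le_exp (-(Real.log 2 / m))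
        have e2 : Real.log 2 / m ≤ p := by
          rw [div_eq_mul_inv]; exact hptail
        linarith
      have e3 : (1-p)^m ≤ Real.exp (-(Real.log 2 / m)) ^ m := by
        apply pow_le_pow_left₀ (by linarith) e1
      have e4 : Real.exp (-(Real.log 2 / m)) ^ (m:ℕ) = Real.exp (-(Real.log 2)) := by
        rw [← Real.exp_nat_mul]
        congr 1
        field_simp
      rw [e4] at e3
      rw [Real.exp_neg, Real.exp_log (by norm_num : (0:ℝ) < 2)] at e3
      linarith
    have htail := tail_lb hn hprob hmeas hindep hmap S hS hc hcx ht0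
    rw [← hp] at htail
    have hfin : c * t * (1/2) ≤ c * t * (1 - (1-p)^m) := by
      apply mul_le_mul_of_nonneg_left _ (by positivity)
      linarith
    calc Real.sqrt (Real.log m) / 2 * c = c * t * (1/2) := by rw [← hT]; ring
      _ ≤ c * t * (1 - (1-p)^m) := hfin
      _ ≤ _ := htail

end Prob




lemma sum_inv_log_le {n : ℕ} (hn : 2 ≤ n) :
    ∑ m ∈ Finset.Icc 2 n, (Real.log m)⁻¹
      ≤ Real.sqrt n / Real.log 2 + 2 * n / Real.log n := by
  have hlog2pos : (0:ℝ) < Real.log 2 := Real.log_pos (by norm_num)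
  have hlognpos : (0:ℝ) < Real.log n := Real.log_pos (by exact_mod_cast hn)
  rw [← Finset.sum_filter_add_sum_filter_not (Finset.Icc 2 n) (fun m => m*m ≤ n)]
  have h1 : ∑ m ∈ (Finset.Icc 2 n).filter (fun m => m*m ≤ n), (Real.log m)⁻¹
      ≤ Real.sqrt n / Real.log 2 := by
    have hcard : (((Finset.Icc 2 n).filter (fun m => m*m ≤ n)).card : ℝ) ≤ Real.sqrt n := by
      have hsub : (Finset.Icc 2 n).filter (fun m => m*m ≤ n) ⊆ Finset.Icc 2 (Nat.sqrt n) := by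
        intro m hm
        rw [Finset.mem_filter, Finset.mem_Icc] at hm
        rw [Finset.mem_Icc]
        exact ⟨hm.1.1, Nat.le_sqrt'.mpr (by rw [pow_two]; exact hm.2)⟩
      have hc1 : ((Finset.Icc 2 n).filter (fun m => m*m ≤ n)).card ≤ Nat.sqrt n := by
        calc _ ≤ (Finset.Icc 2 (Nat.sqrt n)).card := Finset.card_le_card hsub
          _ = Nat.sqrt n + 1 - 2 := Nat.card_Icc 2 (Nat.sqrt n)
          _ ≤ Nat.sqrt n := by omega
      have hc2 : ((Nat.sqrt n : ℝ)) ≤ Real.sqrt n := by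
        rw [show ((Nat.sqrt n : ℝ)) = Real.sqrt ((Nat.sqrt n)^2) from
          (Real.sqrt_sq (by positivity)).symm]
        apply Real.sqrt_le_sqrt
        exact_mod_cast Nat.sqrt_le' n
      calc (((Finset.Icc 2 n).filter (fun m => m*m ≤ n)).card : ℝ) ≤ Nat.sqrt n := by
            exact_mod_cast hc1
        _ ≤ Real.sqrt n := hc2
    have hterm : ∀ m ∈ (Finset.Icc 2 n).filter (fun m => m*m ≤ n),
        (Real.log m)⁻¹ ≤ (Real.log 2)⁻¹ := by
      intro m hm
      rw [Finset.mem_filter, Finset.mem_Icc] at hm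
      apply inv_anti₀ hlog2pos
      apply Real.log_le_log (by norm_num)
      exact_mod_cast hm.1.1
    calc ∑ m ∈ (Finset.Icc 2 n).filter (fun m => m*m ≤ n), (Real.log m)⁻¹
        ≤ (((Finset.Icc 2 n).filter (fun m => m*m ≤ n)).card : ℝ) * (Real.log 2)⁻¹ := by
          have := Finset.sum_le_card_nsmul _ _ _ hterm
          simpa [nsmul_eq_mul] using this
      _ ≤ Real.sqrt n * (Real.log 2)⁻¹ := by
          apply mul_le_mul_of_nonneg_right hcard (by positivity)
      _ = Real.sqrt n / Real.log 2 := by rw [div_eq_mul_inv]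
  have h2 : ∑ m ∈ (Finset.Icc 2 n).filter (fun m => ¬ m*m ≤ n), (Real.log m)⁻¹
      ≤ 2 * n / Real.log n := by
    have hterm : ∀ m ∈ (Finset.Icc 2 n).filter (fun m => ¬ m*m ≤ n),
        (Real.log m)⁻¹ ≤ 2 * (Real.log n)⁻¹ := by
      intro m hm
      rw [Finset.mem_filter, Finset.mem_Icc] at hm
      have hm2 : (2:ℕ) ≤ m := hm.1.1
      have hlogm : (0:ℝ) < Real.log m := Real.log_pos (by exact_mod_cast hm2)
      have hnm : (n:ℝ) ≤ (m:ℝ) * m := by exact_mod_cast le_of_lt (Nat.lt_of_not_le hm.2)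
      have : Real.log n ≤ 2 * Real.log m := by
        calc Real.log n ≤ Real.log ((m:ℝ)*m) := Real.log_le_log (by positivity) hnm
          _ = Real.log m + Real.log m := Real.log_mul (by positivity) (by positivity)
          _ = 2 * Real.log m := by ring
      have h2' : (Real.log m)⁻¹ ≤ 2 / Real.log n := by
        rw [inv_eq_one_div, div_le_div_iff₀ hlogm hlognpos]
        linarith
      rw [div_eq_mul_inv] at h2'
      exact h2'
    calc ∑ m ∈ (Finset.Icc 2 n).filter (fun m => ¬ m*m ≤ n), (Real.log m)⁻¹
        ≤ (((Finset.Icc 2 n).filter (fun m => ¬ m*m ≤ n)).card : ℝ) * (2 * (Real.log n)⁻¹) := by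
          have := Finset.sum_le_card_nsmul _ _ _ hterm
          simpa [nsmul_eq_mul] using this
      _ ≤ (n:ℝ) * (2 * (Real.log n)⁻¹) := by
          apply mul_le_mul_of_nonneg_right _ (by positivity)
          have : ((Finset.Icc 2 n).filter (fun m => ¬ m*m ≤ n)).card ≤ n := by
            calc _ ≤ (Finset.Icc 2 n).card := Finset.card_le_card (Finset.filter_subset _ _)
              _ = n + 1 - 2 := Nat.card_Icc 2 n
              _ ≤ n := by omega
          exact_mod_cast this
      _ = 2 * n / Real.log n := by field_simp
  linarith


lemma sum_shift (f : ℕ → ℝ) (n : ℕ) :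
    ∑ k ∈ Finset.Ico 1 n, f (k+1) = ∑ m ∈ Finset.Icc 2 n, f m := by
  rw [← Finset.Ico_add_one_right_eq_Icc, Finset.sum_Ico_eq_sum_range, Finset.sum_Ico_eq_sum_range]
  apply Finset.sum_congr (by congr 1 <;> omega)
  intro i _
  congr 1
  omega

/-- **Lemma 3.2.**  For `n ≥ 1`, real numbers `x₁, …, xₙ` and independent standard
Gaussians `γ₁, …, γₙ`, one has `((log n / n) ∑ xᵢ²)^{1/2} ≤ 4 E[maxᵢ |γᵢ xᵢ|]`. -/
theorem sqrt_log_div_n_sum_sq_le_four_mul_expectation_max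
    {Ω : Type*} [MeasurableSpace Ω] (μ : Measure Ω) (n : ℕ) (hn : 1 ≤ n)
    (g : Fin n → Ω → ℝ) (hg : IsGaussianFam μ g) (x : Fin n → ℝ) :
    Real.sqrt (Real.log n / n * ∑ i, x i ^ 2) ≤ 4 * ∫ ω, ⨆ i, |g i ω * x i| ∂μ := by
  obtain ⟨hprob, hmeas, hindep, hmap⟩ := hg
  haveI := hprob
  set E := ∫ ω, ⨆ i, |g i ω * x i| ∂μ with hE
  have hE0 : 0 ≤ E :=
    integral_nonneg (F_nonneg hn hprob hmeas hindep hmap)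
  -- trivial case n = 1
  rcases eq_or_lt_of_le hn with h1 | hn2
  · subst h1
    norm_num
    positivity
  -- n ≥ 2
  have hn2' : (2:ℕ) ≤ n := hn2
  have hnR : (2:ℝ) ≤ n := by exact_mod_cast hn2'
  -- sorting
  set f : Fin n → ℝ := fun i => -|x i| with hf
  set σ := Tuple.sort f with hσ
  have hmono : Monotone (f ∘ σ) := Tuple.monotone_sort f
  have hanti : ∀ j j' : Fin n, j' ≤ j → |x (σ j)| ≤ |x (σ j')| := by
    intro j j' h
    have := hmono h
    simp only [Function.comp_apply, hf, neg_le_neg_iff] at this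
    linarith
  -- pointwise bounds
  have hb1 : ∀ j : Fin n, |x (σ j)|^2 ≤ 1.61 * E^2 := by
    intro j
    have h := single_lb hn hprob hmeas hindep hmap (x := x) (i₀ := σ j) (abs_nonneg _) le_rfl
    rw [← hE] at h
    nlinarith [abs_nonneg (x (σ j))]
  have hb2 : ∀ j : Fin n, Real.log (j.1+1) * |x (σ j)|^2 ≤ 4 * E^2 := by
    intro j
    set S : Finset (Fin n) := (Finset.Iic j).image σ with hS
    have hScard : S.card = j.1 + 1 := by
      rw [hS, Finset.card_image_of_injective _ σ.injective, Fin.card_Iic]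
    have hSne : S.Nonempty := ⟨σ j, Finset.mem_image_of_mem σ (Finset.mem_Iic.2 le_rfl)⟩
    have hcx : ∀ i ∈ S, |x (σ j)| ≤ |x i| := by
      intro i hi
      rw [hS, Finset.mem_image] at hi
      obtain ⟨j', hj', rfl⟩ := hi
      exact hanti j j' (Finset.mem_Iic.1 hj')
    have h := key_lb (x := x) hn hprob hmeas hindep hmap S hSne (abs_nonneg _) hcx
    rw [← hE, hScard] at h
    set s := Real.sqrt (Real.log (j.1+1)) with hs
    have hlognn : 0 ≤ Real.log ((j.1:ℝ)+1) := by
      apply Real.log_nonneg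
      have : (0:ℝ) ≤ j.1 := by positivity
      linarith
    have hs2 : s^2 = Real.log (j.1+1) := by
      rw [hs]
      apply Real.sq_sqrt
      push_cast
      exact_mod_cast hlognn
    have h' : s * |x (σ j)| ≤ 2 * E := by
      have : s / 2 * |x (σ j)| ≤ E := by
        convert h using 3
        push_cast
        ring
      linarith
    have h'' := mul_self_le_mul_self (by positivity : (0:ℝ) ≤ s * |x (σ j)|) h'
    calc Real.log (j.1+1) * |x (σ j)|^2 = (s * |x (σ j)|) * (s * |x (σ j)|) := by
          rw [← hs2]; ring
      _ ≤ (2*E) * (2*E) := h''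
      _ = 4 * E^2 := by ring
  -- sum bound
  set w : ℕ → ℝ := fun k => if k = 0 then 1.61*E^2 else 4*E^2 * (Real.log (k+1))⁻¹ with hw
  have hW : ∀ j : Fin n, |x (σ j)|^2 ≤ w j.1 := by
    intro j
    by_cases hj : j.1 = 0
    · rw [hw]; simp only [hj, if_pos rfl]; exact hb1 j
    · rw [hw]; simp only [if_neg hj]
      have hj1 : 1 ≤ j.1 := Nat.one_le_iff_ne_zero.2 hj
      have hlogpos : (0:ℝ) < Real.log (j.1+1) := by
        apply Real.log_pos
        have : (1:ℝ) ≤ (j.1:ℝ) := by exact_mod_cast hj1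
        push_cast
        linarith
      have h := hb2 j
      rw [← sub_nonneg]
      have e1 : 4*E^2 * (Real.log (j.1+1))⁻¹ - |x (σ j)|^2
          = (4*E^2 - Real.log (j.1+1) * |x (σ j)|^2) * (Real.log (j.1+1))⁻¹ := by
        field_simp
      rw [e1]
      apply mul_nonneg (by push_cast at h ⊢; linarith) (by positivity)
  have hsum1 : ∑ i, x i ^ 2 = ∑ j : Fin n, |x (σ j)|^2 := by
    rw [← Equiv.sum_comp σ (fun i => x i ^ 2)]
    apply Finset.sum_congr rfl
    intro j _
    rw [sq_abs]
  have hsum2 : ∑ j : Fin n, |x (σ j)|^2 ≤ ∑ j : Fin n, w j.1 :=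
    Finset.sum_le_sum (fun j _ => hW j)
  have hsum3 : ∑ j : Fin n, w j.1 = ∑ k ∈ Finset.range n, w k :=
    Fin.sum_univ_eq_sum_range w n
  set T := ∑ m ∈ Finset.Icc 2 n, (Real.log m)⁻¹ with hT
  have hsum4 : ∑ k ∈ Finset.range n, w k = 1.61*E^2 + 4*E^2 * T := by
    rw [Finset.range_eq_Ico, Finset.sum_eq_sum_Ico_succ_bot (by omega : 0 < n)]
    have e1 : w 0 = 1.61*E^2 := by simp [hw]
    have e2 : ∑ k ∈ Finset.Ico 1 n, w k
        = ∑ k ∈ Finset.Ico 1 n, 4*E^2 * (Real.log ((k+1:ℕ)))⁻¹ := by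
      apply Finset.sum_congr rfl
      intro k hk
      rw [Finset.mem_Ico] at hk
      rw [hw]
      simp only [if_neg (by omega : ¬ k = 0)]
      push_cast
      ring_nf
    rw [e1, e2, ← Finset.mul_sum, sum_shift (fun m => (Real.log m)⁻¹) n, ← hT]
  have hSig : ∑ i, x i ^ 2 ≤ 1.61*E^2 + 4*E^2 * T := by
    rw [hsum1]
    calc ∑ j : Fin n, |x (σ j)|^2 ≤ ∑ j : Fin n, w j.1 := hsum2
      _ = 1.61*E^2 + 4*E^2*T := by rw [hsum3, hsum4]
  -- numeric assembly
  have hlognpos : (0:ℝ) < Real.log n := Real.log_pos (by linarith)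
  have hTbd : T ≤ Real.sqrt n / Real.log 2 + 2 * n / Real.log n := sum_inv_log_le hn2'
  have hexp1 : (2.7:ℝ) ≤ Real.exp 1 := by
    have := Real.exp_one_gt_d9; linarith
  have hlog_le : ∀ y : ℝ, 0 < y → Real.log y ≤ y / Real.exp 1 := by
    intro y hy
    have h := Real.log_le_sub_one_of_pos (x := y / Real.exp 1) (by positivity)
    rw [Real.log_div (ne_of_gt hy) (Real.exp_ne_zero 1), Real.log_exp] at h
    linarith
  have hc3 : Real.log n ≤ 0.3704 * n := by
    have h := hlog_le n (by linarith)
    have : (n:ℝ) / Real.exp 1 ≤ (n:ℝ)/2.7 := by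
      apply div_le_div_of_nonneg_left (by linarith) (by norm_num) hexp1
    have h27 : (n:ℝ)/2.7 ≤ 0.3704*n := by rw [div_le_iff₀ (by norm_num)]; nlinarith
    linarith
  have hlsq : Real.log n * Real.sqrt n ≤ 0.7408 * n := by
    have h := hlog_le (Real.sqrt n) (Real.sqrt_pos.2 (by linarith))
    rw [Real.log_sqrt (by positivity)] at h
    have hsn : 0 ≤ Real.sqrt n := Real.sqrt_nonneg _
    have h1 : Real.log n ≤ 2 * (Real.sqrt n / Real.exp 1) := by linarith
    have h2 : Real.log n * Real.sqrt n ≤ 2 * (Real.sqrt n / Real.exp 1) * Real.sqrt n :=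
      mul_le_mul_of_nonneg_right h1 hsn
    have h3 : 2 * (Real.sqrt n / Real.exp 1) * Real.sqrt n = 2 * (n:ℝ) / Real.exp 1 := by
      rw [show 2 * (Real.sqrt n / Real.exp 1) * Real.sqrt n
          = 2 * (Real.sqrt n * Real.sqrt n) / Real.exp 1 by ring,
        Real.mul_self_sqrt (by positivity : (0:ℝ) ≤ (n:ℝ))]
    have h4 : 2 * (n:ℝ) / Real.exp 1 ≤ 2*n/2.7 :=
      div_le_div_of_nonneg_left (by positivity) (by norm_num) hexp1
    have h5 : 2*(n:ℝ)/2.7 ≤ 0.7408*n := by rw [div_le_iff₀ (by norm_num)]; nlinarith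
    rw [h3] at h2
    linarith
  have hlog2 : (0.693:ℝ) ≤ Real.log 2 := by
    have := Real.log_two_gt_d9; linarith
  have hc2 : Real.log n * T ≤ 3.07 * n := by
    have e0 : Real.log n * (Real.sqrt n / Real.log 2 + 2 * n / Real.log n)
        = (Real.log n * Real.sqrt n) / Real.log 2 + 2*n := by
      field_simp
    have e1 : Real.log n * T ≤ (Real.log n * Real.sqrt n) / Real.log 2 + 2*n := by
      rw [← e0]
      exact mul_le_mul_of_nonneg_left hTbd hlognpos.le
    have e2 : (Real.log n * Real.sqrt n) / Real.log 2 ≤ 0.7408*n / 0.693 := by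
      apply div_le_div₀ (by positivity) hlsq (by norm_num) hlog2
    have e3 : (0.7408:ℝ)*n/0.693 ≤ 1.07*n := by
      rw [div_le_iff₀ (by norm_num)]; nlinarith
    linarith
  have hmain : Real.log n * (∑ i, x i ^ 2) ≤ 16 * E^2 * n := by
    have c1 : Real.log n * (∑ i, x i ^ 2) ≤ Real.log n * (1.61*E^2 + 4*E^2*T) :=
      mul_le_mul_of_nonneg_left hSig hlognpos.le
    have c2 : Real.log n * (1.61*E^2 + 4*E^2*T)
        = 1.61*E^2*(Real.log n) + 4*E^2*(Real.log n * T) := by ring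
    have c3 : 1.61*E^2*(Real.log n) ≤ 1.61*E^2*(0.3704*n) :=
      mul_le_mul_of_nonneg_left hc3 (by positivity)
    have c4 : 4*E^2*(Real.log n * T) ≤ 4*E^2*(3.07*n) :=
      mul_le_mul_of_nonneg_left hc2 (by positivity)
    have c5 : 1.61*E^2*(0.3704*n) + 4*E^2*(3.07*n) ≤ 16*E^2*n := by nlinarith [sq_nonneg E]
    linarith
  have hfin : Real.log n / n * (∑ i, x i ^ 2) ≤ (4*E)^2 := by
    rw [div_mul_eq_mul_div, div_le_iff₀ (by positivity : (0:ℝ) < (n:ℝ))]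
    calc Real.log n * (∑ i, x i ^ 2) ≤ 16*E^2*n := hmain
      _ = (4*E)^2 * n := by ring
  calc Real.sqrt (Real.log n / n * ∑ i, x i ^ 2) ≤ Real.sqrt ((4*E)^2) :=
        Real.sqrt_le_sqrt hfin
    _ = 4*E := Real.sqrt_sq (by positivity)
end
end

section
/- Let T_n : c_0 → ℝ be the coordinate functionals T_n x = x_n. Then for all N ≥ 2, the γ-bound of {T_n : 1 ≤ n ≤ N} satisfies ℛ^γ({T_n : 1 ≤ n ≤ N}) ≥ (N / (2 log(2N)))^{1/2}. -/
open MeasureTheory ProbabilityTheory Filter ENNReal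

noncomputable section

section AuxGamma
open MeasureTheory ProbabilityTheory Filter Real Set Topology ZeroAtInfty

noncomputable def phiAux (x : ℝ) : ℝ := (Real.sqrt (2*Real.pi))⁻¹ * Real.exp (-x^2/2)

lemma phiAux_nonneg (x : ℝ) : 0 ≤ phiAux x := by unfold phiAux; positivity

lemma phiAux_even (x : ℝ) : phiAux (-x) = phiAux x := by unfold phiAux; ring_nf

lemma measurable_phiAux : Measurable phiAux := by
  unfold phiAux
  exact (measurable_id.pow_const 2).neg.div_const 2 |>.exp.const_mul _

lemma gaussianPDFReal_eq_phiAux : gaussianPDFReal 0 1 = phiAux := by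
  funext x; simp [gaussianPDFReal, phiAux]

lemma hasDerivAt_phiAux (x : ℝ) : HasDerivAt phiAux (-x * phiAux x) x := by
  unfold phiAux
  have h1 : HasDerivAt (fun x : ℝ => -x^2/2) (-x) x := by
    have := (hasDerivAt_pow 2 x).neg.div_const 2
    simpa using this.congr_deriv (by ring)
  have := (h1.exp).const_mul (Real.sqrt (2*Real.pi))⁻¹
  exact this.congr_deriv (by ring)

lemma integrable_poly_phiAux (n : ℕ) : Integrable (fun x => x^n * phiAux x) := by
  have h := integrable_rpow_mul_exp_neg_mul_sq (by norm_num : (0:ℝ) < 1/2) (s := n)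
    (by exact_mod_cast neg_one_lt_zero.trans_le n.cast_nonneg)
  refine (h.const_mul (Real.sqrt (2*Real.pi))⁻¹).congr (Eventually.of_forall fun x => ?_)
  show (Real.sqrt (2*Real.pi))⁻¹ * (x ^ (n:ℝ) * Real.exp (-(1/2) * x^2)) = x ^ n * phiAux x
  rw [Real.rpow_natCast]
  unfold phiAux
  rw [show -(1/2 : ℝ)*x^2 = -x^2/2 by ring]
  ring

lemma integrable_phiAux : Integrable phiAux := by simpa using integrable_poly_phiAux 0

lemma integral_phiAux : ∫ x, phiAux x = 1 := by
  have := integral_gaussianPDFReal_eq_one 0 (one_ne_zero)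
  rwa [gaussianPDFReal_eq_phiAux] at this

lemma integral_x_phiAux : ∫ x, x * phiAux x = 0 := by
  refine integral_eq_zero_of_hasDerivAt_of_integrable (f := fun x => -phiAux x)
    (fun x => ?_) (by simpa using integrable_poly_phiAux 1) integrable_phiAux.neg
  exact (hasDerivAt_phiAux x).neg.congr_deriv (by ring)

lemma integral_sq_phiAux : ∫ x, x^2 * phiAux x = 1 := by
  have h0 : ∫ x, (x^2 - 1) * phiAux x = 0 := by
    refine integral_eq_zero_of_hasDerivAt_of_integrable (f := fun x => -(x * phiAux x))
      (fun x => ?_) ?_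
      ((integrable_poly_phiAux 1).neg.congr (Eventually.of_forall fun x => by simp))
    · have h1 : HasDerivAt (fun x => x * phiAux x) (1 * phiAux x + x * (-x * phiAux x)) x :=
        (hasDerivAt_id x).mul (hasDerivAt_phiAux x)
      exact h1.neg.congr_deriv (by ring)
    · refine ((integrable_poly_phiAux 2).sub integrable_phiAux).congr
        (Eventually.of_forall fun x => ?_)
      show x^2 * phiAux x - phiAux x = (x^2 - 1) * phiAux x
      ring
  have h1 : Integrable (fun x => x^2 * phiAux x) := integrable_poly_phiAux 2
  have := integral_sub h1 integrable_phiAux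
  simp only [integral_phiAux] at this
  have h2 : ∫ x, (x^2 - 1) * phiAux x = (∫ x, x^2 * phiAux x) - 1 := by
    rw [← this]; congr 1; funext x; ring
  linarith [h2 ▸ h0]

lemma gaussianReal_eq_withDensity :
    gaussianReal 0 1 = volume.withDensity (fun x => ((phiAux x).toNNReal : ENNReal)) := by
  rw [gaussianReal_of_var_ne_zero 0 one_ne_zero]
  congr 1
  funext x
  rw [gaussianPDF, gaussianPDFReal_eq_phiAux]
  rfl

lemma integral_gaussianReal_eq (f : ℝ → ℝ) :
    ∫ x, f x ∂(gaussianReal 0 1) = ∫ x, phiAux x * f x := by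
  rw [gaussianReal_eq_withDensity,
    integral_withDensity_eq_integral_smul measurable_phiAux.real_toNNReal f]
  congr 1; funext x
  simp [NNReal.smul_def, Real.coe_toNNReal _ (phiAux_nonneg x)]

lemma integrable_gaussianReal_iff (f : ℝ → ℝ) :
    Integrable f (gaussianReal 0 1) ↔ Integrable (fun x => phiAux x * f x) := by
  rw [gaussianReal_eq_withDensity,
    integrable_withDensity_iff_integrable_smul measurable_phiAux.real_toNNReal]
  have hx : ∀ x, (phiAux x).toNNReal • f x = phiAux x * f x := fun x => by
    simp [NNReal.smul_def, Real.coe_toNNReal _ (phiAux_nonneg x)]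
  constructor <;> intro h
  · exact h.congr (Eventually.of_forall fun x => hx x)
  · exact h.congr (Eventually.of_forall fun x => (hx x).symm)

lemma tendsto_phiAux : Tendsto phiAux atTop (nhds 0) := by
  unfold phiAux
  rw [show (0:ℝ) = (Real.sqrt (2*Real.pi))⁻¹ * 0 by ring]
  refine Tendsto.const_mul _ (Real.tendsto_exp_atBot.comp ?_)
  have h : Tendsto (fun x : ℝ => x^2/2) atTop atTop :=
    (tendsto_pow_atTop two_ne_zero).atTop_div_const (by norm_num)
  simpa [neg_div] using tendsto_neg_atBot_iff.2 h

lemma tendsto_x_phiAux : Tendsto (fun x => x * phiAux x) atTop (nhds 0) := by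
  have hg : Tendsto (fun x : ℝ =>
      (Real.sqrt (2*Real.pi))⁻¹ * Real.exp (1/2) * (x * Real.exp (-x))) atTop (nhds 0) := by
    rw [show (0:ℝ) = (Real.sqrt (2*Real.pi))⁻¹ * Real.exp (1/2) * 0 by ring]
    exact Tendsto.const_mul _ (by simpa using tendsto_pow_mul_exp_neg_atTop_nhds_zero 1)
  refine squeeze_zero' ?_ ?_ hg
  · filter_upwards [eventually_ge_atTop (0:ℝ)] with x hx
    exact mul_nonneg hx (phiAux_nonneg x)
  · filter_upwards [eventually_ge_atTop (1:ℝ)] with x hx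
    unfold phiAux
    have h1 : Real.exp (-x^2/2) ≤ Real.exp (1/2) * Real.exp (-x) := by
      rw [← Real.exp_add]
      exact Real.exp_le_exp.2 (by nlinarith)
    calc x * ((Real.sqrt (2*Real.pi))⁻¹ * Real.exp (-x^2/2))
        ≤ x * ((Real.sqrt (2*Real.pi))⁻¹ * (Real.exp (1/2) * Real.exp (-x))) := by
          refine mul_le_mul_of_nonneg_left
            (mul_le_mul_of_nonneg_left h1 (by positivity)) (by linarith)
      _ = (Real.sqrt (2*Real.pi))⁻¹ * Real.exp (1/2) * (x * Real.exp (-x)) := by ring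

lemma integrable_phiAux_mul_max (s : ℝ) :
    Integrable (fun x => phiAux x * max (x^2 - s^2) 0) := by
  have hfmeas : Measurable fun x => phiAux x * max (x^2 - s^2) 0 :=
    measurable_phiAux.mul
      (((measurable_id.pow_const 2).sub measurable_const).max measurable_const)
  refine (integrable_poly_phiAux 2).mono' hfmeas.aestronglyMeasurable
    (Eventually.of_forall fun x => ?_)
  rw [Real.norm_eq_abs, abs_of_nonneg (mul_nonneg (phiAux_nonneg x) (le_max_right _ _))]
  have : max (x^2 - s^2) 0 ≤ x^2 := max_le (by nlinarith) (by positivity)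
  calc phiAux x * max (x^2 - s^2) 0 ≤ phiAux x * x^2 :=
        mul_le_mul_of_nonneg_left this (phiAux_nonneg x)
    _ = x^2 * phiAux x := by ring

lemma tail_bound_phiAux {s : ℝ} (hs : 1 ≤ s) :
    ∫ x, phiAux x * max (x^2 - s^2) 0 ≤ 2 * phiAux s := by
  have hs0 : 0 < s := lt_of_lt_of_le one_pos hs
  set c : ℝ := s^2*(1-s^2)/(s^2+1) with hc
  set f : ℝ → ℝ := fun x => phiAux x * max (x^2 - s^2) 0 with hfdef
  set D : ℝ → ℝ := fun x => (x^2 + c - 1 + c*(x^2)⁻¹) * phiAux x with hD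
  set F : ℝ → ℝ := fun x => -((x + c*x⁻¹) * phiAux x) with hF
  have hfint : Integrable f := integrable_phiAux_mul_max s
  have hderiv : ∀ x ∈ Ici s, HasDerivAt F (D x) x := by
    intro x hx
    have hx0 : x ≠ 0 := by simp only [mem_Ici] at hx; nlinarith
    have h1 : HasDerivAt (fun x : ℝ => x + c*x⁻¹) (1 + c * -(x^2)⁻¹) x :=
      (hasDerivAt_id x).add ((hasDerivAt_inv hx0).const_mul c)
    have h2 := (h1.mul (hasDerivAt_phiAux x)).neg
    refine h2.congr_deriv ?_
    show -((1 + c * -(x^2)⁻¹) * phiAux x + (x + c*x⁻¹) * (-x * phiAux x)) = D x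
    rw [hD]
    field_simp
    ring
  have hDint : IntegrableOn D (Ioi s) := by
    have h1 : Integrable (fun x => x^2 * phiAux x + (c-1) * phiAux x) :=
      (integrable_poly_phiAux 2).add (integrable_phiAux.const_mul _)
    have h2 : IntegrableOn (fun x => c * (x^2)⁻¹ * phiAux x) (Ioi s) := by
      refine Integrable.mono' (g := fun x => |c| * phiAux x)
        ((integrable_phiAux.const_mul |c|).restrict)
        (((measurable_const.mul ((measurable_id.pow_const 2).inv)).mul
          measurable_phiAux).aestronglyMeasurable) ?_
      filter_upwards [ae_restrict_mem measurableSet_Ioi] with x hx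
      have hx1 : 1 ≤ x := le_trans hs (le_of_lt hx)
      have hx2 : 1 ≤ x^2 := by nlinarith
      rw [Real.norm_eq_abs, abs_mul, abs_mul, abs_of_nonneg (phiAux_nonneg x)]
      have : |(x ^ 2)⁻¹| ≤ 1 := by
        rw [abs_inv, abs_of_nonneg (by positivity)]
        exact inv_le_one_of_one_le₀ hx2
      calc |c| * |(x^2)⁻¹| * phiAux x ≤ |c| * 1 * phiAux x := by
            refine mul_le_mul_of_nonneg_right
              (mul_le_mul_of_nonneg_left this (abs_nonneg c)) (phiAux_nonneg x)
        _ = |c| * phiAux x := by ring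
    refine (h1.restrict.add h2).congr (Eventually.of_forall fun x => ?_)
    show x^2 * phiAux x + (c-1) * phiAux x + c * (x^2)⁻¹ * phiAux x = D x
    rw [hD]; ring
  have hF0 : Tendsto F atTop (nhds 0) := by
    have t2 : Tendsto (fun x : ℝ => c * x⁻¹ * phiAux x) atTop (nhds 0) := by
      rw [show (0:ℝ) = c * 0 * 0 by ring]
      exact (tendsto_inv_atTop_zero.const_mul c).mul tendsto_phiAux
    have := (tendsto_x_phiAux.add t2)
    rw [add_zero] at this
    have h3 : Tendsto (fun x : ℝ => (x + c*x⁻¹) * phiAux x) atTop (nhds 0) :=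
      this.congr (fun x => by ring)
    simpa [hF] using h3.neg
  have hIoiD : ∫ x in Ioi s, D x = (s + c*s⁻¹) * phiAux s := by
    have := integral_Ioi_of_hasDerivAt_of_tendsto' hderiv hDint hF0
    rw [this, hF]
    ring
  have hpt : ∀ x ∈ Ioi s, f x ≤ D x := by
    intro x hx
    have hxs : s < x := hx
    have hx2 : s^2 ≤ x^2 := by nlinarith
    have hmax : max (x^2 - s^2) 0 = x^2 - s^2 := max_eq_left (by linarith)
    rw [hfdef]
    show phiAux x * max (x^2 - s^2) 0 ≤ D x
    rw [hmax, hD]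
    have key : x^2 - s^2 ≤ x^2 + c - 1 + c*(x^2)⁻¹ := by
      have hx2pos : (0:ℝ) < x^2 := by nlinarith
      have hs2pos : (0:ℝ) < s^2 + 1 := by positivity
      have hid : c + s^2 - 1 + c*(x^2)⁻¹ = (s^2-1)/(s^2+1) * (1 - s^2/x^2) := by
        rw [hc]; field_simp; ring
      have hpos : 0 ≤ (s^2-1)/(s^2+1) * (1 - s^2/x^2) := by
        apply mul_nonneg (div_nonneg (by nlinarith) (by positivity))
        have : s^2/x^2 ≤ 1 := (div_le_one hx2pos).2 hx2
        linarith
      nlinarith [hid ▸ hpos]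
    calc phiAux x * (x^2 - s^2) ≤ phiAux x * (x^2 + c - 1 + c*(x^2)⁻¹) :=
          mul_le_mul_of_nonneg_left key (phiAux_nonneg x)
      _ = (x^2 + c - 1 + c*(x^2)⁻¹) * phiAux x := by ring
  have htail : ∫ x in Ioi s, f x ≤ (s + c*s⁻¹) * phiAux s := by
    rw [← hIoiD]
    exact setIntegral_mono_on hfint.integrableOn hDint measurableSet_Ioi hpt
  have hsupp : ∀ x ∉ (Iic (-s) ∪ Ioi s), f x = 0 := by
    intro x hx
    simp only [mem_union, mem_Iic, mem_Ioi, not_or, not_le, not_lt] at hx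
    have : x^2 ≤ s^2 := by nlinarith [hx.1, hx.2]
    rw [hfdef]
    show phiAux x * max (x^2 - s^2) 0 = 0
    rw [max_eq_right (by linarith), mul_zero]
  have hsplit : ∫ x, f x = (∫ x in Iic (-s), f x) + ∫ x in Ioi s, f x := by
    rw [← setIntegral_eq_integral_of_forall_compl_eq_zero hsupp]
    exact setIntegral_union (Iic_disjoint_Ioi (by linarith)) measurableSet_Ioi
      hfint.integrableOn hfint.integrableOn
  have hleft : ∫ x in Iic (-s), f x = ∫ x in Ioi s, f x := by
    have h1 : ∫ x in Iic (-s), f (-x) = ∫ x in Ioi s, f x := by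
      have := integral_comp_neg_Iic (-s) f
      rwa [neg_neg] at this
    rw [← h1]
    refine setIntegral_congr_fun measurableSet_Iic fun x _ => ?_
    show phiAux x * max (x^2 - s^2) 0 = phiAux (-x) * max ((-x)^2 - s^2) 0
    rw [phiAux_even, neg_pow]
    ring_nf
  have hfrac : s + c*s⁻¹ ≤ 1 := by
    have : s + c*s⁻¹ = 2*s/(s^2+1) := by rw [hc]; field_simp; ring
    rw [this, div_le_one (by positivity)]
    nlinarith
  calc ∫ x, f x = (∫ x in Iic (-s), f x) + ∫ x in Ioi s, f x := hsplit
    _ = 2 * ∫ x in Ioi s, f x := by rw [hleft]; ring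
    _ ≤ 2 * ((s + c*s⁻¹) * phiAux s) := by linarith
    _ ≤ 2 * (1 * phiAux s) := by
        have := mul_le_mul_of_nonneg_right hfrac (phiAux_nonneg s)
        linarith
    _ = 2 * phiAux s := by ring

noncomputable def eC0 (k : ℕ) : C₀(ℕ, ℝ) where
  toFun := fun m => if m = k then 1 else 0
  continuous_toFun := continuous_of_discreteTopology
  zero_at_infty' := by
    rw [cocompact_eq_atTop (α := ℕ)]
    refine Tendsto.congr' ?_ tendsto_const_nhds
    filter_upwards [eventually_gt_atTop k] with m hm
    simp [hm.ne']

lemma eC0_apply (k m : ℕ) : eC0 k m = if m = k then 1 else 0 := rfl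

lemma c0_norm_le (f : C₀(ℕ,ℝ)) {M : ℝ} (hM : 0 ≤ M) (h : ∀ m, ‖f m‖ ≤ M) : ‖f‖ ≤ M := by
  rw [← ZeroAtInftyContinuousMap.norm_toBCF_eq_norm]
  exact (BoundedContinuousFunction.norm_le hM).2 h

lemma c0_sum_apply (N : ℕ) (g : Fin N → C₀(ℕ, ℝ)) (m : ℕ) :
    (∑ n : Fin N, g n) m = ∑ n : Fin N, g n m := by
  let ev : C₀(ℕ,ℝ) →+ ℝ :=
    { toFun := fun f => f m, map_zero' := rfl, map_add' := fun f g => rfl }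
  exact map_sum ev g Finset.univ

end AuxGamma

open ZeroAtInfty in
/-- **Lemma 3.4 (lower bound).**  Let `Tₙ x = xₙ` be the coordinate functionals on `c₀`.
Then for `N ≥ 2`, `ℛ^γ({Tₙ : 1 ≤ n ≤ N}) ≥ (N / (2 log(2N)))^{1/2}`: every admissible
`γ`-boundedness constant `C` of the family is at least this value. -/
theorem gammaBound_coordinate_functionals_ge
    {Ω : Type*} [MeasurableSpace Ω] (μ : Measure Ω) (g : ℕ → Ω → ℝ)
    (hg : IsGaussianFam μ g)
    (T : ℕ → C₀(ℕ, ℝ) →L[ℝ] ℝ) (hT : ∀ (n : ℕ) (x : C₀(ℕ, ℝ)), T n x = x n)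
    (N : ℕ) (hN : 2 ≤ N) :
    ∀ C : ℝ, 0 ≤ C → BoundedWith μ g (T '' {n : ℕ | 1 ≤ n ∧ n ≤ N}) C →
      Real.sqrt (N / (2 * Real.log (2 * N))) ≤ C := by
  -- setup
  intro C hC hbound
  have hprob : IsProbabilityMeasure μ := hg.1
  have hmeas : ∀ i, Measurable (g i) := hg.2.1
  have hindep := hg.2.2.1
  have hmap := hg.2.2.2
  have hN2 : (2:ℝ) ≤ (N:ℝ) := by exact_mod_cast hN
  set L : ℝ := 2 * Real.log (2 * N) with hLdef
  have hlog : 1 ≤ Real.log (2 * N) := by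
    rw [Real.le_log_iff_exp_le (by positivity)]
    have := Real.exp_one_lt_d9
    calc Real.exp 1 ≤ 2.7182818286 := this.le
      _ ≤ 2 * (N:ℝ) := by nlinarith
  have hL2 : 2 ≤ L := by rw [hLdef]; linarith
  set s : ℝ := Real.sqrt (L - 1) with hsdef
  have hs2 : s^2 = L - 1 := Real.sq_sqrt (by linarith)
  have hs1 : 1 ≤ s := (Real.le_sqrt zero_le_one (by linarith)).2 (by linarith)
  -- the functionals and vectors
  set T' : Fin N → C₀(ℕ, ℝ) →L[ℝ] ℝ := fun n => T (n.1 + 1) with hT'def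
  set x' : Fin N → C₀(ℕ, ℝ) := fun n => eC0 (n.1 + 1) with hx'def
  have hmem : ∀ n : Fin N, T' n ∈ T '' {n : ℕ | 1 ≤ n ∧ n ≤ N} := by
    intro n
    exact ⟨n.1 + 1, ⟨Nat.le_add_left 1 n.1, Nat.succ_le_of_lt n.isLt⟩, rfl⟩
  have hineq := hbound N T' x' hmem
  -- moments of the random variables
  have hγm : ∀ (i : ℕ) (f : ℝ → ℝ), Measurable f →
      ∫ ω, f (g i ω) ∂μ = ∫ x, phiAux x * f x := by
    intro i f hf
    rw [← integral_gaussianReal_eq, ← hmap i,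
      integral_map (hmeas i).aemeasurable hf.aestronglyMeasurable]
  have hγint : ∀ (i : ℕ) (f : ℝ → ℝ), Measurable f →
      Integrable (fun x => phiAux x * f x) → Integrable (fun ω => f (g i ω)) μ := by
    intro i f hf hint
    have h1 : Integrable f (gaussianReal 0 1) := (integrable_gaussianReal_iff f).2 hint
    rw [← hmap i] at h1
    exact (integrable_map_measure hf.aestronglyMeasurable (hmeas i).aemeasurable).1 h1
  have hint1 : ∀ i, Integrable (g i) μ := by
    intro i
    have := hγint i id measurable_id
      ((integrable_poly_phiAux 1).congr (Eventually.of_forall fun x => by simp [mul_comm]))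
    simpa using this
  have hint2 : ∀ i, Integrable (fun ω => (g i ω)^2) μ := fun i =>
    hγint i (fun x => x^2) (measurable_id.pow_const 2)
      ((integrable_poly_phiAux 2).congr (Eventually.of_forall fun x => by ring_nf))
  have hmean : ∀ i, ∫ ω, g i ω ∂μ = 0 := by
    intro i
    have h0 := hγm i id measurable_id
    calc ∫ ω, g i ω ∂μ = ∫ x, phiAux x * id x := h0
      _ = ∫ x, x * phiAux x := by congr 1; funext x; simp [mul_comm]
      _ = 0 := integral_x_phiAux
  have hvar : ∀ i, ∫ ω, (g i ω)^2 ∂μ = 1 := by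
    intro i
    have := hγm i (fun x => x^2) (measurable_id.pow_const 2)
    rw [this, show (fun x => phiAux x * x^2) = fun x => x^2 * phiAux x from
      funext fun x => by ring, integral_sq_phiAux]
  have hintmul : ∀ i j : ℕ, Integrable (fun ω => g i ω * g j ω) μ := by
    intro i j
    rcases eq_or_ne i j with rfl | hij
    · exact (hint2 i).congr (Eventually.of_forall fun ω => by ring)
    · exact ((hindep.indepFun hij).integrable_mul (hint1 i) (hint1 j)).congr
        (Eventually.of_forall fun ω => rfl)
  have hval : ∀ n m : Fin N, ∫ ω, g n.1 ω * g m.1 ω ∂μ = if n = m then 1 else 0 := by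
    intro n m
    rcases eq_or_ne n m with rfl | hnm
    · simp only [if_pos rfl]
      rw [show (fun ω => g n.1 ω * g n.1 ω) = fun ω => (g n.1 ω)^2 from
        funext fun ω => by ring]
      exact hvar n.1
    · rw [if_neg hnm]
      have hij : (n.1 : ℕ) ≠ m.1 := fun h => hnm (Fin.ext h)
      have := (hindep.indepFun hij).integral_mul_eq_mul_integral (hint1 n.1).aestronglyMeasurable
        (hint1 m.1).aestronglyMeasurable
      rw [show (fun ω => g n.1 ω * g m.1 ω) = g n.1 * g m.1 from rfl, this,
        hmean n.1, hmean m.1, mul_zero]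
  -- value of the left-hand side
  have hLHS : ∫ ω, ‖∑ n : Fin N, g n.1 ω • T' n (x' n)‖ ^ 2 ∂μ = (N : ℝ) := by
    have hTval : ∀ n : Fin N, T' n (x' n) = 1 := by
      intro n
      rw [hT'def, hx'def, hT, eC0_apply]
      simp
    have hptw : ∀ ω, ‖∑ n : Fin N, g n.1 ω • T' n (x' n)‖ ^ 2
        = ∑ n : Fin N, ∑ m : Fin N, g n.1 ω * g m.1 ω := by
      intro ω
      simp only [hTval, smul_eq_mul, mul_one]
      rw [Real.norm_eq_abs, sq_abs, sq, Finset.sum_mul_sum]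
    calc ∫ ω, ‖∑ n : Fin N, g n.1 ω • T' n (x' n)‖ ^ 2 ∂μ
        = ∫ ω, ∑ n : Fin N, ∑ m : Fin N, g n.1 ω * g m.1 ω ∂μ := by
          exact integral_congr_ae (Eventually.of_forall hptw)
      _ = ∑ n : Fin N, ∑ m : Fin N, ∫ ω, g n.1 ω * g m.1 ω ∂μ := by
          rw [integral_finset_sum _ fun n _ =>
            integrable_finset_sum _ fun m _ => hintmul n.1 m.1]
          exact Finset.sum_congr rfl fun n _ =>
            integral_finset_sum _ fun m _ => hintmul n.1 m.1
      _ = ∑ n : Fin N, (1:ℝ) := by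
          refine Finset.sum_congr rfl fun n _ => ?_
          rw [Finset.sum_congr rfl fun m _ => hval n m]
          simp
      _ = (N : ℝ) := by simp
  -- bound for the right-hand side
  have hh : ∀ i : ℕ, Integrable (fun ω => max ((g i ω)^2 - s^2) 0) μ :=
    fun i => hγint i (fun x => max (x^2 - s^2) 0)
      (((measurable_id.pow_const 2).sub measurable_const).max measurable_const)
      (integrable_phiAux_mul_max s)
  have hhval : ∀ i : ℕ, ∫ ω, max ((g i ω)^2 - s^2) 0 ∂μ ≤ 2 * phiAux s := by
    intro i
    rw [hγm i (fun x => max (x^2 - s^2) 0)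
      (((measurable_id.pow_const 2).sub measurable_const).max measurable_const)]
    exact tail_bound_phiAux hs1
  have hRHS : ∫ ω, ‖∑ n : Fin N, g n.1 ω • x' n‖ ^ 2 ∂μ ≤ L := by
    have hptw : ∀ ω, ‖∑ n : Fin N, g n.1 ω • x' n‖ ^ 2
        ≤ s^2 + ∑ n : Fin N, max ((g n.1 ω)^2 - s^2) 0 := by
      intro ω
      set R : ℝ := Real.sqrt (s^2 + ∑ n : Fin N, max ((g n.1 ω)^2 - s^2) 0) with hR
      have hsumnn : 0 ≤ ∑ n : Fin N, max ((g n.1 ω)^2 - s^2) 0 :=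
        Finset.sum_nonneg fun n _ => le_max_right _ _
      have hRsq : R^2 = s^2 + ∑ n : Fin N, max ((g n.1 ω)^2 - s^2) 0 :=
        Real.sq_sqrt (by positivity)
      have hnorm : ‖∑ n : Fin N, g n.1 ω • x' n‖ ≤ R := by
        refine c0_norm_le _ (Real.sqrt_nonneg _) fun m => ?_
        have happ : (∑ n : Fin N, g n.1 ω • x' n) m
            = ∑ n : Fin N, g n.1 ω * (if m = n.1 + 1 then 1 else 0) := by
          rw [c0_sum_apply]
          simp [hx'def, eC0_apply]
        rw [happ, Real.norm_eq_abs]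
        by_cases hex : ∃ n : Fin N, m = n.1 + 1
        · obtain ⟨n, hn⟩ := hex
          have hsum : ∑ k : Fin N, g k.1 ω * (if m = k.1 + 1 then 1 else 0)
              = g n.1 ω := by
            rw [Finset.sum_eq_single n]
            · simp [hn]
            · intro k _ hk
              have : m ≠ k.1 + 1 := by
                rw [hn]
                intro h
                exact hk (Fin.ext (by omega))
              simp [this]
            · intro h; exact absurd (Finset.mem_univ n) h
          rw [hsum]
          have h1 : (g n.1 ω)^2 ≤ R^2 := by
            rw [hRsq]
            have h2 : (g n.1 ω)^2 - s^2 ≤ max ((g n.1 ω)^2 - s^2) 0 := le_max_left _ _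
            have h3 : max ((g n.1 ω)^2 - s^2) 0
                ≤ ∑ k : Fin N, max ((g k.1 ω)^2 - s^2) 0 :=
              Finset.single_le_sum (f := fun k : Fin N => max ((g k.1 ω)^2 - s^2) 0)
                (fun k _ => le_max_right _ _) (Finset.mem_univ n)
            linarith
          calc |g n.1 ω| = Real.sqrt ((g n.1 ω)^2) := (Real.sqrt_sq_eq_abs _).symm
            _ ≤ Real.sqrt (R^2) := Real.sqrt_le_sqrt h1
            _ = R := by rw [hR, Real.sqrt_sq (Real.sqrt_nonneg _)]
        · have hsum : ∑ k : Fin N, g k.1 ω * (if m = k.1 + 1 then 1 else 0) = 0 := by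
            refine Finset.sum_eq_zero fun k _ => ?_
            have : m ≠ k.1 + 1 := fun h => hex ⟨k, h⟩
            simp [this]
          rw [hsum, abs_zero, hR]
          exact Real.sqrt_nonneg _
      calc ‖∑ n : Fin N, g n.1 ω • x' n‖ ^ 2 ≤ R^2 := by
            have := pow_le_pow_left₀ (norm_nonneg _) hnorm 2
            simpa using this
        _ = s^2 + ∑ n : Fin N, max ((g n.1 ω)^2 - s^2) 0 := hRsq
    have hintg : Integrable
        (fun ω => s^2 + ∑ n : Fin N, max ((g n.1 ω)^2 - s^2) 0) μ :=
      (integrable_const _).add (integrable_finset_sum _ fun n _ => hh n.1)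
    have h1 : ∫ ω, ‖∑ n : Fin N, g n.1 ω • x' n‖ ^ 2 ∂μ
        ≤ ∫ ω, (s^2 + ∑ n : Fin N, max ((g n.1 ω)^2 - s^2) 0) ∂μ :=
      integral_mono_of_nonneg (Eventually.of_forall fun ω => by positivity) hintg
        (Eventually.of_forall hptw)
    have h2 : ∫ ω, (s^2 + ∑ n : Fin N, max ((g n.1 ω)^2 - s^2) 0) ∂μ
        = s^2 + ∑ n : Fin N, ∫ ω, max ((g n.1 ω)^2 - s^2) 0 ∂μ := by
      rw [integral_add (integrable_const _)
        (integrable_finset_sum _ fun n _ => hh n.1), integral_const]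
      simp only [measure_univ, ENNReal.toReal_one, probReal_univ, smul_eq_mul, one_mul]
      rw [integral_finset_sum _ fun n _ => hh n.1]
    have h3 : ∑ n : Fin N, ∫ ω, max ((g n.1 ω)^2 - s^2) 0 ∂μ
        ≤ ∑ n : Fin N, 2 * phiAux s :=
      Finset.sum_le_sum fun n _ => hhval n.1
    have h4 : (∑ _n : Fin N, 2 * phiAux s) = N * (2 * phiAux s) := by
      rw [Finset.sum_const]
      simp [mul_comm]
    have h5 : (N:ℝ) * (2 * phiAux s) ≤ 1 := by
      have hphi : phiAux s = (Real.sqrt (2*Real.pi))⁻¹ * Real.exp (1/2) / (2 * N) := by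
        unfold phiAux
        rw [hs2, hLdef]
        rw [show -(2 * Real.log (2 * (N:ℝ)) - 1)/2 = 1/2 - Real.log (2*(N:ℝ)) by ring]
        rw [Real.exp_sub, Real.exp_log (by positivity)]
        ring
      rw [hphi]
      have hNpos : (0:ℝ) < N := by linarith
      have hkey : Real.exp (1/2) ≤ Real.sqrt (2*Real.pi) := by
        have h2pi : Real.exp (1/2) ^ 2 ≤ 2 * Real.pi := by
          rw [sq, ← Real.exp_add]
          norm_num
          nlinarith [Real.exp_one_lt_d9, Real.pi_gt_d6]
        exact (Real.le_sqrt (Real.exp_nonneg _) (by positivity)).2 h2pi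
      have hsqrtpos : (0:ℝ) < Real.sqrt (2*Real.pi) := by
        apply Real.sqrt_pos.2; positivity
      rw [show (N:ℝ) * (2 * ((Real.sqrt (2*Real.pi))⁻¹ * Real.exp (1/2) / (2*N)))
          = Real.exp (1/2) / Real.sqrt (2*Real.pi) by field_simp]
      rw [div_le_one hsqrtpos]
      exact hkey
    calc ∫ ω, ‖∑ n : Fin N, g n.1 ω • x' n‖ ^ 2 ∂μ
        ≤ s^2 + ∑ n : Fin N, ∫ ω, max ((g n.1 ω)^2 - s^2) 0 ∂μ := by rw [← h2]; exact h1
      _ ≤ s^2 + N * (2 * phiAux s) := by rw [← h4]; linarith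
      _ ≤ s^2 + 1 := by linarith
      _ = L := by rw [hs2]; ring
  -- conclusion
  have hLpos : (0:ℝ) < L := by linarith
  have hfinal : Real.sqrt (N:ℝ) ≤ C * Real.sqrt L := by
    calc Real.sqrt (N:ℝ) = Real.sqrt (∫ ω, ‖∑ n : Fin N, g n.1 ω • T' n (x' n)‖ ^ 2 ∂μ) := by
          rw [hLHS]
      _ ≤ C * Real.sqrt (∫ ω, ‖∑ n : Fin N, g n.1 ω • x' n‖ ^ 2 ∂μ) := hineq
      _ ≤ C * Real.sqrt L := mul_le_mul_of_nonneg_left (Real.sqrt_le_sqrt hRHS) hC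
  rw [Real.sqrt_div (Nat.cast_nonneg N) L, div_le_iff₀ (Real.sqrt_pos.2 hLpos)]
  exact hfinal
end
end

section
/- Let J, N ≥ 1, let x_1, …, x_J ∈ c_0, let A_1, …, A_N be pairwise disjoint subsets of {1,…,J}, and let γ_1, …, γ_J be independent standard Gaussian random variables. For 1 ≤ n ≤ N set Γ_n = ∑_{j∈A_n} γ_j x_j ∈ c_0 and let Γ_n(n) denote the n-th coordinate of Γ_n. Then E[max_{1≤n≤N} |Γ_n(n)|²] ≤ E‖∑_{j=1}^J γ_j x_j‖²_{c_0}. -/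
open MeasureTheory ProbabilityTheory Filter ENNReal

noncomputable section

lemma aux_gaussian_sq_integrable :
    Integrable (fun x : ℝ => x ^ 2) (gaussianReal 0 1) := by
  rw [gaussianReal_of_var_ne_zero 0 one_ne_zero,
    integrable_withDensity_iff (measurable_gaussianPDF 0 1)
      (Filter.Eventually.of_forall fun _ => ENNReal.ofReal_lt_top)]
  have h : Integrable (fun x : ℝ => (Real.sqrt (2 * Real.pi))⁻¹ *
      (x ^ (((2:ℕ)):ℝ) * Real.exp (-(2⁻¹) * x ^ 2))) volume :=
    (integrable_rpow_mul_exp_neg_mul_sq (by norm_num) (by norm_num)).const_mul _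
  refine h.congr (Filter.Eventually.of_forall fun x => ?_)
  simp only []
  rw [show ((2:ℕ):ℝ) = (2:ℝ) by norm_num, Real.rpow_two]
  rw [gaussianPDF, ENNReal.toReal_ofReal (gaussianPDFReal_nonneg _ _ _)]
  simp only [gaussianPDFReal, NNReal.coe_one, mul_one, sub_zero]
  rw [show (-(x ^ 2) / 2 : ℝ) = -(2⁻¹) * x ^ 2 by ring]
  ring

lemma aux_gaussian_memLp2 : MemLp (id : ℝ → ℝ) 2 (gaussianReal 0 1) :=
  (memLp_two_iff_integrable_sq aestronglyMeasurable_id).2 aux_gaussian_sq_integrable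

lemma aux_map_eq_pi {Ω : Type*} [MeasurableSpace Ω] (μ : Measure Ω) [IsProbabilityMeasure μ]
    {J : ℕ} (g : Fin J → Ω → ℝ) (hmeas : ∀ j, Measurable (g j))
    (hind : iIndepFun g μ) :
    μ.map (fun ω j => g j ω) = Measure.pi (fun j => μ.map (g j)) := by
  have hpm : ∀ j, IsProbabilityMeasure (μ.map (g j)) := fun j =>
    Measure.isProbabilityMeasure_map (hmeas j).aemeasurable
  haveI : ∀ j, SigmaFinite (μ.map (g j)) := fun j => by
    haveI := hpm j; infer_instance
  refine (Measure.pi_eq (μ := fun j => μ.map (g j)) fun s hs => ?_).symm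
  rw [Measure.map_apply (measurable_pi_lambda _ hmeas) (MeasurableSet.univ_pi hs)]
  have hpre : (fun ω j => g j ω) ⁻¹' Set.pi Set.univ s = ⋂ j ∈ Finset.univ, g j ⁻¹' s j := by
    ext ω; simp [Set.mem_pi]
  rw [hpre, hind.measure_inter_preimage_eq_mul Finset.univ (fun j _ => hs j)]
  exact Finset.prod_congr rfl fun j _ => (Measure.map_apply (hmeas j) (hs j)).symm

/-- signs attached to booleans -/
def sgnB : Bool → ℝ := fun b => if b then 1 else -1

lemma sgnB_mul_self (b : Bool) : sgnB b * sgnB b = 1 := by cases b <;> simp [sgnB]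

/-- blockwise sign coefficients -/
def coefC {J N : ℕ} (A : Fin N → Finset (Fin J)) (δ : Fin N → Bool) (j : Fin J) : ℝ :=
  ∏ m, if j ∈ A m then sgnB (δ m) else 1

lemma coefC_mul_self {J N : ℕ} (A : Fin N → Finset (Fin J)) (δ : Fin N → Bool) (j : Fin J) :
    coefC A δ j * coefC A δ j = 1 := by
  rw [coefC, ← Finset.prod_mul_distrib]
  refine Finset.prod_eq_one fun m _ => ?_
  by_cases h : j ∈ A m <;> simp [h, sgnB_mul_self]

lemma coefC_abs {J N : ℕ} (A : Fin N → Finset (Fin J)) (δ : Fin N → Bool) (j : Fin J) :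
    |coefC A δ j| = 1 := by
  rcases mul_self_eq_one_iff.1 (coefC_mul_self A δ j) with h | h <;> simp [h]

lemma coefC_key {J N : ℕ} (A : Fin N → Finset (Fin J))
    (hA : ∀ m n : Fin N, m ≠ n → Disjoint (A m) (A n)) (n : Fin N) (j : Fin J) :
    (∑ δ : Fin N → Bool, sgnB (δ n) * coefC A δ j) = if j ∈ A n then (2:ℝ)^N else 0 := by
  classical
  have h1 : ∀ δ : Fin N → Bool, sgnB (δ n) * coefC A δ j
      = ∏ m, ((if m = n then sgnB (δ m) else 1) * (if j ∈ A m then sgnB (δ m) else 1)) := by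
    intro δ
    rw [Finset.prod_mul_distrib, coefC]
    congr 1
    rw [Finset.prod_ite_eq' Finset.univ n (fun m => sgnB (δ m))]
    simp
  calc (∑ δ : Fin N → Bool, sgnB (δ n) * coefC A δ j)
      = ∑ δ ∈ Fintype.piFinset (fun _ : Fin N => (Finset.univ : Finset Bool)),
          ∏ m, ((if m = n then sgnB (δ m) else 1) * (if j ∈ A m then sgnB (δ m) else 1)) := by
        rw [Fintype.piFinset_univ]
        exact Finset.sum_congr rfl fun δ _ => h1 δ
    _ = ∏ m, ∑ b : Bool, ((if m = n then sgnB b else 1) * (if j ∈ A m then sgnB b else 1)) :=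
        Finset.sum_prod_piFinset Finset.univ
          (fun m b => ((if m = n then sgnB b else 1) * (if j ∈ A m then sgnB b else 1)))
    _ = if j ∈ A n then (2:ℝ)^N else 0 := by
        by_cases hj : j ∈ A n
        · rw [if_pos hj]
          have h2 : ∀ m : Fin N,
              (∑ b : Bool, ((if m = n then sgnB b else 1) * (if j ∈ A m then sgnB b else 1)))
                = 2 := by
            intro m
            by_cases hm : m = n
            · subst hm
              simp [hj, sgnB]
              norm_num
            · have hjm : j ∉ A m := Finset.disjoint_right.mp (hA m n hm) hj
              simp [hm, hjm]
          rw [Finset.prod_congr rfl fun m _ => h2 m]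
          simp
        · rw [if_neg hj]
          refine Finset.prod_eq_zero (Finset.mem_univ n) ?_
          simp [hj, sgnB]

open ZeroAtInfty in
lemma aux_coe_sum {ι : Type*} (s : Finset ι) (f : ι → C₀(ℕ, ℝ)) (k : ℕ) :
    ((∑ j ∈ s, f j : C₀(ℕ, ℝ)) k) = ∑ j ∈ s, (f j) k := by
  classical
  induction s using Finset.induction_on with
  | empty => simp
  | insert _ _ h ih =>
    rw [Finset.sum_insert h, Finset.sum_insert h, ← ih]
    simp

open ZeroAtInfty in
lemma aux_coord_le (f : C₀(ℕ, ℝ)) (k : ℕ) : |f k| ≤ ‖f‖ := by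
  rw [← ZeroAtInftyContinuousMap.norm_toBCF_eq_norm, ← Real.norm_eq_abs]
  exact f.toBCF.norm_coe_le_norm k

open ZeroAtInfty in
lemma aux_pointwise {J N : ℕ} (hN : 1 ≤ N) (x : Fin J → C₀(ℕ, ℝ))
    (A : Fin N → Finset (Fin J)) (hA : ∀ m n : Fin N, m ≠ n → Disjoint (A m) (A n))
    (v : Fin J → ℝ) :
    (⨆ n : Fin N, ((∑ j ∈ A n, v j • x j : C₀(ℕ, ℝ)) (n : ℕ)) ^ 2)
      ≤ ((2:ℝ)^N)⁻¹ * ∑ δ : Fin N → Bool, ‖∑ j, (coefC A δ j * v j) • x j‖ ^ 2 := by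
  classical
  have hFinN : Nonempty (Fin N) := ⟨⟨0, hN⟩⟩
  refine ciSup_le fun n => ?_
  set Y : (Fin N → Bool) → ℝ :=
    fun δ => ((∑ j, (coefC A δ j * v j) • x j : C₀(ℕ, ℝ)) (n : ℕ)) with hY
  have hid : (2:ℝ)^N * ((∑ j ∈ A n, v j • x j : C₀(ℕ, ℝ)) (n : ℕ))
      = ∑ δ : Fin N → Bool, sgnB (δ n) * Y δ := by
    have e1 : ∀ δ : Fin N → Bool, Y δ = ∑ j, coefC A δ j * (v j * x j (n : ℕ)) := by
      intro δ
      simp only [hY]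
      rw [aux_coe_sum]
      exact Finset.sum_congr rfl fun j _ => by simp [mul_assoc]
    have e2 : ((∑ j ∈ A n, v j • x j : C₀(ℕ, ℝ)) (n : ℕ)) = ∑ j ∈ A n, v j * x j (n : ℕ) := by
      rw [aux_coe_sum]
      exact Finset.sum_congr rfl fun j _ => by simp
    simp_rw [e1, Finset.mul_sum, ← mul_assoc]
    rw [Finset.sum_comm]
    have e3 : ∀ j, (∑ δ : Fin N → Bool, sgnB (δ n) * coefC A δ j * v j * x j (n:ℕ))
        = (if j ∈ A n then (2:ℝ)^N else 0) * (v j * x j (n:ℕ)) := by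
      intro j
      have h5 : ∀ δ : Fin N → Bool, sgnB (δ n) * coefC A δ j * v j * x j (n:ℕ)
          = (sgnB (δ n) * coefC A δ j) * (v j * x j (n:ℕ)) := fun δ => by ring
      rw [Finset.sum_congr rfl fun δ _ => h5 δ, ← Finset.sum_mul, coefC_key A hA n j]
    rw [Finset.sum_congr rfl fun j _ => e3 j]
    have e4 : ∀ j : Fin J, (if j ∈ A n then (2:ℝ)^N else 0) * (v j * x j (n:ℕ))
        = (if j ∈ A n then (2:ℝ)^N * (v j * x j (n:ℕ)) else 0) := by
      intro j; split <;> simp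
    rw [Finset.sum_congr rfl fun j _ => e4 j, Finset.sum_ite_mem, Finset.univ_inter, e2,
      Finset.mul_sum]
  have h2N : (0:ℝ) < (2:ℝ)^N := by positivity
  have hGamma : ((∑ j ∈ A n, v j • x j : C₀(ℕ, ℝ)) (n : ℕ))
      = ((2:ℝ)^N)⁻¹ * ∑ δ : Fin N → Bool, sgnB (δ n) * Y δ := by
    rw [← hid, ← mul_assoc, inv_mul_cancel₀ h2N.ne', one_mul]
  rw [hGamma, mul_pow]
  have hCS : (∑ δ : Fin N → Bool, sgnB (δ n) * Y δ) ^ 2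
      ≤ (2:ℝ)^N * ∑ δ : Fin N → Bool, ‖∑ j, (coefC A δ j * v j) • x j‖ ^ 2 := by
    have h1 := sq_sum_le_card_mul_sum_sq (s := (Finset.univ : Finset (Fin N → Bool)))
      (f := fun δ => sgnB (δ n) * Y δ)
    have hcard : ((Finset.univ : Finset (Fin N → Bool)).card : ℝ) = (2:ℝ)^N := by
      simp [Finset.card_univ]
    refine h1.trans ?_
    rw [hcard]
    refine mul_le_mul_of_nonneg_left (Finset.sum_le_sum fun δ _ => ?_) h2N.le
    have : (sgnB (δ n) * Y δ) ^ 2 = Y δ ^ 2 := by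
      rw [mul_pow, sq, sgnB_mul_self, one_mul]
    rw [this]
    have hb : |Y δ| ≤ ‖∑ j, (coefC A δ j * v j) • x j‖ := aux_coord_le _ _
    calc Y δ ^ 2 = |Y δ| ^ 2 := (sq_abs _).symm
      _ ≤ ‖∑ j, (coefC A δ j * v j) • x j‖ ^ 2 := by
          exact pow_le_pow_left₀ (abs_nonneg _) hb 2
  calc (((2:ℝ)^N)⁻¹) ^ 2 * (∑ δ : Fin N → Bool, sgnB (δ n) * Y δ) ^ 2
      ≤ (((2:ℝ)^N)⁻¹) ^ 2 * ((2:ℝ)^N * ∑ δ : Fin N → Bool,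
          ‖∑ j, (coefC A δ j * v j) • x j‖ ^ 2) := by
        exact mul_le_mul_of_nonneg_left hCS (by positivity)
    _ = ((2:ℝ)^N)⁻¹ * ∑ δ : Fin N → Bool, ‖∑ j, (coefC A δ j * v j) • x j‖ ^ 2 := by
        field_simp


open ZeroAtInfty in
/-- The key estimate in the proof of Lemma 3.4: for `x₁, …, x_J ∈ c₀`, pairwise disjoint
subsets `A₁, …, A_N` of `{1, …, J}` and independent standard Gaussians `γ₁, …, γ_J`,
setting `Γₙ = ∑_{j ∈ Aₙ} γⱼ xⱼ`, one has
`E[maxₙ |Γₙ(n)|²] ≤ E‖∑ⱼ γⱼ xⱼ‖²`. -/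
theorem expectation_max_diagonal_sq_le
    {Ω : Type*} [MeasurableSpace Ω] (μ : Measure Ω) (J N : ℕ) (hJ : 1 ≤ J) (hN : 1 ≤ N)
    (g : Fin J → Ω → ℝ) (hg : IsGaussianFam μ g) (x : Fin J → C₀(ℕ, ℝ))
    (A : Fin N → Finset (Fin J)) (hA : ∀ m n : Fin N, m ≠ n → Disjoint (A m) (A n)) :
    ∫ ω, ⨆ n : Fin N, ((∑ j ∈ A n, g j ω • x j : C₀(ℕ, ℝ)) (n : ℕ)) ^ 2 ∂μ ≤
      ∫ ω, ‖∑ j, g j ω • x j‖ ^ 2 ∂μ := by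
  classical
  obtain ⟨hprob, hmeas, hind, hlaw⟩ := hg
  haveI := hprob
  have hFinN : Nonempty (Fin N) := ⟨⟨0, hN⟩⟩
  -- continuity of the basic functional
  have hFcont : Continuous (fun v : Fin J → ℝ => ‖∑ j, v j • x j‖ ^ 2) := by
    have h1 : Continuous (fun v : Fin J → ℝ => (∑ j, v j • x j : C₀(ℕ, ℝ))) :=
      continuous_finset_sum _ fun j _ => (continuous_apply j).smul continuous_const
    exact (h1.norm).pow 2
  have hG : Measurable (fun ω (j : Fin J) => g j ω) := measurable_pi_lambda _ hmeas
  have hG' : ∀ δ : Fin N → Bool, Measurable (fun ω (j : Fin J) => coefC A δ j * g j ω) :=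
    fun δ => measurable_pi_lambda _ fun j => (hmeas j).const_mul _
  -- equality of laws under blockwise sign flips
  have hlawmap : ∀ δ : Fin N → Bool,
      μ.map (fun ω (j : Fin J) => coefC A δ j * g j ω) = μ.map (fun ω (j : Fin J) => g j ω) := by
    intro δ
    have hmeas' : ∀ j, Measurable (fun ω => coefC A δ j * g j ω) :=
      fun j => (hmeas j).const_mul _
    have hind' : iIndepFun
        (fun j ω => coefC A δ j * g j ω) μ :=
      hind.comp (fun j => fun t => coefC A δ j * t) (fun j => measurable_const_mul _)
    rw [aux_map_eq_pi μ g hmeas hind, aux_map_eq_pi μ (fun j ω => coefC A δ j * g j ω)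
      hmeas' hind']
    congr 1
    funext j
    have hmm : μ.map (fun ω => coefC A δ j * g j ω)
        = (μ.map (g j)).map (fun t => coefC A δ j * t) := by
      rw [Measure.map_map (measurable_const_mul _) (hmeas j)]
      rfl
    rw [hmm, hlaw j, gaussianReal_map_const_mul, mul_zero]
    have hone : (⟨(coefC A δ j)^2, sq_nonneg _⟩ : NNReal) = 1 := by
      ext
      simp only [NNReal.coe_one]
      rw [sq]
      exact coefC_mul_self A δ j
    rw [mul_one]; exact congrArg (gaussianReal 0) hone
  -- equality of the flipped integrals
  have int_eq : ∀ δ : Fin N → Bool,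
      ∫ ω, ‖∑ j, (coefC A δ j * g j ω) • x j‖ ^ 2 ∂μ = ∫ ω, ‖∑ j, g j ω • x j‖ ^ 2 ∂μ := by
    intro δ
    have e1 : ∫ ω, ‖∑ j, (coefC A δ j * g j ω) • x j‖ ^ 2 ∂μ
        = ∫ v, ‖∑ j, v j • x j‖ ^ 2 ∂(μ.map (fun ω (j : Fin J) => coefC A δ j * g j ω)) :=
      (integral_map (hG' δ).aemeasurable hFcont.aestronglyMeasurable).symm
    have e2 : ∫ ω, ‖∑ j, g j ω • x j‖ ^ 2 ∂μ
        = ∫ v, ‖∑ j, v j • x j‖ ^ 2 ∂(μ.map (fun ω (j : Fin J) => g j ω)) :=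
      (integral_map hG.aemeasurable hFcont.aestronglyMeasurable).symm
    rw [e1, e2, hlawmap δ]
  -- integrability
  have hmemg : ∀ j, MemLp (g j) 2 μ := by
    intro j
    have h1 : MemLp id 2 (μ.map (g j)) := by rw [hlaw j]; exact aux_gaussian_memLp2
    exact (memLp_map_measure_iff aestronglyMeasurable_id (hmeas j).aemeasurable).1 h1
  have hS : MemLp (fun ω => ∑ j, ‖x j‖ * |g j ω|) 2 μ := by
    have h2 : ∀ j : Fin J, MemLp (fun ω => ‖x j‖ * |g j ω|) 2 μ := by
      intro j
      have h1 : MemLp (fun ω => ‖g j ω‖) 2 μ := (hmemg j).norm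
      simpa [Real.norm_eq_abs] using h1.const_mul (‖x j‖)
    exact memLp_finset_sum (f := fun (j : Fin J) ω => ‖x j‖ * |g j ω|) Finset.univ
      (fun j _ => h2 j)
  have hS2 : Integrable (fun ω => (∑ j, ‖x j‖ * |g j ω|) ^ 2) μ := hS.integrable_sq
  have hint : ∀ δ : Fin N → Bool,
      Integrable (fun ω => ‖∑ j, (coefC A δ j * g j ω) • x j‖ ^ 2) μ := by
    intro δ
    refine hS2.mono' ((hFcont.measurable.comp (hG' δ)).aestronglyMeasurable)
      (Filter.Eventually.of_forall fun ω => ?_)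
    rw [Real.norm_eq_abs, abs_of_nonneg (by positivity)]
    have hb : ‖∑ j, (coefC A δ j * g j ω) • x j‖ ≤ ∑ j, ‖x j‖ * |g j ω| := by
      refine (norm_sum_le _ _).trans (Finset.sum_le_sum fun j _ => ?_)
      refine le_trans (norm_smul_le (coefC A δ j * g j ω) (x j)) (le_of_eq ?_)
      rw [Real.norm_eq_abs, abs_mul, coefC_abs A δ, one_mul, mul_comm]
    exact pow_le_pow_left₀ (norm_nonneg _) hb 2
  -- assembling
  have lhs_nonneg : ∀ ω : Ω,
      0 ≤ ⨆ n : Fin N, ((∑ j ∈ A n, g j ω • x j : C₀(ℕ, ℝ)) (n : ℕ)) ^ 2 := by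
    intro ω
    exact le_ciSup_of_le (Set.finite_range _).bddAbove (Classical.arbitrary (Fin N))
      (sq_nonneg _)
  have h2N : (0:ℝ) < (2:ℝ)^N := by positivity
  calc ∫ ω, ⨆ n : Fin N, ((∑ j ∈ A n, g j ω • x j : C₀(ℕ, ℝ)) (n : ℕ)) ^ 2 ∂μ
      ≤ ∫ ω, ((2:ℝ)^N)⁻¹ * ∑ δ : Fin N → Bool,
          ‖∑ j, (coefC A δ j * g j ω) • x j‖ ^ 2 ∂μ := by
        refine integral_mono_of_nonneg (Filter.Eventually.of_forall lhs_nonneg)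
          ((integrable_finset_sum _ fun δ _ => hint δ).const_mul _)
          (Filter.Eventually.of_forall fun ω => ?_)
        exact aux_pointwise hN x A hA (fun j => g j ω)
    _ = ((2:ℝ)^N)⁻¹ * ∑ δ : Fin N → Bool,
          ∫ ω, ‖∑ j, (coefC A δ j * g j ω) • x j‖ ^ 2 ∂μ := by
        rw [integral_const_mul, integral_finset_sum _ fun δ _ => hint δ]
    _ = ((2:ℝ)^N)⁻¹ * ∑ _δ : Fin N → Bool, ∫ ω, ‖∑ j, g j ω • x j‖ ^ 2 ∂μ := by
        rw [Finset.sum_congr rfl fun δ _ => int_eq δ]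
    _ = ∫ ω, ‖∑ j, g j ω • x j‖ ^ 2 ∂μ := by
        rw [Finset.sum_const, Finset.card_univ]
        have hcard : (Fintype.card (Fin N → Bool)) = 2 ^ N := by simp
        rw [hcard, nsmul_eq_mul]
        push_cast
        rw [← mul_assoc, inv_mul_cancel₀ h2N.ne', one_mul]

end
end
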